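/- arXiv:2506.18207 — 5 statements merged into one kernel-verified Lean document; each statement's English description precedes it below -/
import Mathlib

section
/- Let ξ = (ξ₀, ξ₁, ξ₂, …) be an element of T₀((V)) (i.e., ξ₀ = 0) such that the power series Σₙ ‖ξₙ‖ zⁿ has infinite radius of convergence, and let g₁, g₂ ∈ T₁((V)) be tensor series satisfying factorial decay estimates ‖πₙ(gᵢ)‖ ≤ C·ω^{n/p}/(n/p)! for some constants C, ω > 0, p ≥ 1 and all n ≥ 1. Then the tensor series g₁ ⊗ ξ ⊗ g₂ also has infinite radius of convergence, i.e. limsup_{n→∞} ‖πₙ(g₁ ⊗ ξ ⊗ g₂)‖^{1/n} = 0. -/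
open scoped TensorProduct

noncomputable section

variable (V : Type*) [NormedAddCommGroup V] [NormedSpace ℝ V]

/-- The `n`-th tensor power `V^⊗n`. -/
abbrev TComp (n : ℕ) := ⨂[ℝ] (_ : Fin n), V

/-- Formal tensor series `T((V)) = Π_{n≥0} V^⊗n`. -/
def TSeries := ∀ n : ℕ, TComp V n

variable {V}

/-- The projective tensor (semi)norm on `V^⊗n`. -/
def tnorm {n : ℕ} (x : TComp V n) : ℝ := PiTensorProduct.projectiveSeminorm x

/-- Multiplication `V^⊗k ⊗ V^⊗m → V^⊗(k+m)`. -/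
def mulComp {k m : ℕ} (x : TComp V k) (y : TComp V m) : TComp V (k + m) :=
  (PiTensorProduct.reindex ℝ (fun _ => V) finSumFinEquiv)
    ((PiTensorProduct.tmulEquiv ℝ V) (x ⊗ₜ[ℝ] y))

/-- Degree cast `V^⊗k ≃ V^⊗m` for `k = m`. -/
def castComp {k m : ℕ} (h : k = m) (x : TComp V k) : TComp V m :=
  (PiTensorProduct.reindex ℝ (fun _ => V) (finCongr h)) x

/-- The empty tensor product, i.e. the unit `1 ∈ V^⊗0`. -/
def oneComp : TComp V 0 := PiTensorProduct.tprod ℝ (fun i : Fin 0 => i.elim0)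

/-- The product of tensor series: `(ξ ⊗ η)_n = Σ_{k=0}^{n} ξ_k ⊗ η_{n−k}`. -/
def seriesMul (ξ η : TSeries V) : TSeries V := fun n =>
  ∑ k ∈ (Finset.range (n + 1)).attach,
    castComp (by have := Finset.mem_range.mp k.2; omega)
      (mulComp (ξ k.1) (η (n - k.1)))

section Aux

open PiTensorProduct

lemma seminorm_finset_sum_le {E α : Type*} [AddCommGroup E] [Module ℝ E]
    (p : Seminorm ℝ E) (s : Finset α) (f : α → E) :
    p (∑ i ∈ s, f i) ≤ ∑ i ∈ s, p (f i) := by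
  classical
  induction s using Finset.induction with
  | empty => simp
  | insert a s h ih =>
    rw [Finset.sum_insert h, Finset.sum_insert h]
    exact (map_add_le_add p _ _).trans (by linarith)

lemma projectiveSeminorm_reindex_le {ι ι₂ : Type*} [Fintype ι] [Fintype ι₂] (e : ι ≃ ι₂)
    (x : ⨂[ℝ] _ : ι, V) :
    projectiveSeminorm (reindex ℝ (fun _ => V) e x) ≤ projectiveSeminorm x := by
  rw [projectiveSeminorm_apply x]
  letI := nonempty_subtype.mpr (nonempty_lifts x)
  refine le_ciInf fun ⟨p, hp⟩ => ?_
  set F : ℝ × (ι → V) → ℝ × (ι₂ → V) := fun a => (a.1, fun i => a.2 (e.symm i)) with hF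
  have hp' : (FreeAddMonoid.ofList (List.map F p.toList) : FreeAddMonoid (ℝ × (ι₂ → V))) ∈ lifts (reindex ℝ (fun _ => V) e x) := by
    rw [mem_lifts_iff, FreeAddMonoid.toList_ofList]
    rw [mem_lifts_iff] at hp
    rw [← hp, map_list_sum (reindex ℝ (fun _ => V) e)]
    rw [List.map_map, List.map_map]
    congr 1
    refine List.map_congr_left fun a _ => ?_
    simp only [Function.comp_apply, hF, LinearEquiv.coe_coe, map_smul, reindex_tprod]
  refine le_trans (ciInf_le (bddBelow_projectiveSemiNormAux _) ⟨_, hp'⟩) ?_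
  apply le_of_eq
  simp only [projectiveSeminormAux, FreeAddMonoid.toList_ofList, Function.comp_apply, List.map_map]
  congr 1
  refine List.map_congr_left fun a _ => ?_
  simp only [Function.comp_apply, hF]
  rw [Equiv.prod_comp e.symm (fun i => ‖a.2 i‖)]

lemma projectiveSeminorm_reindex {ι ι₂ : Type*} [Fintype ι] [Fintype ι₂] (e : ι ≃ ι₂)
    (x : ⨂[ℝ] _ : ι, V) :
    projectiveSeminorm (reindex ℝ (fun _ => V) e x) = projectiveSeminorm x := by
  refine le_antisymm (projectiveSeminorm_reindex_le e x) ?_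
  have h := projectiveSeminorm_reindex_le e.symm (V := V) (reindex ℝ (fun _ => V) e x)
  rwa [← reindex_symm, LinearEquiv.symm_apply_apply] at h

lemma mulComp_add_left {k m : ℕ} (x x' : TComp V k) (y : TComp V m) :
    mulComp (x + x') y = mulComp x y + mulComp x' y := by
  simp [mulComp, TensorProduct.add_tmul]

lemma mulComp_add_right {k m : ℕ} (x : TComp V k) (y y' : TComp V m) :
    mulComp x (y + y') = mulComp x y + mulComp x y' := by
  simp [mulComp, TensorProduct.tmul_add]

lemma mulComp_smul_left {k m : ℕ} (c : ℝ) (x : TComp V k) (y : TComp V m) :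
    mulComp (c • x) y = c • mulComp x y := by
  rw [mulComp, mulComp, ← TensorProduct.smul_tmul', map_smul, map_smul]

lemma mulComp_smul_right {k m : ℕ} (c : ℝ) (x : TComp V k) (y : TComp V m) :
    mulComp x (c • y) = c • mulComp x y := by
  simp [mulComp, TensorProduct.tmul_smul]

lemma mulComp_zero_left {k m : ℕ} (y : TComp V m) :
    mulComp (0 : TComp V k) y = 0 := by
  simp [mulComp, TensorProduct.zero_tmul]

lemma mulComp_zero_right {k m : ℕ} (x : TComp V k) :
    mulComp x (0 : TComp V m) = 0 := by
  simp [mulComp, TensorProduct.tmul_zero]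

lemma mulComp_tprod_tprod {k m : ℕ} (a : Fin k → V) (b : Fin m → V) :
    mulComp (tprod ℝ a) (tprod ℝ b) =
      tprod ℝ (fun i => Sum.elim a b (finSumFinEquiv.symm i)) := by
  simp [mulComp, reindex_tprod]

lemma tnorm_mul_tprod_tprod_le {k m : ℕ} (a : Fin k → V) (b : Fin m → V) :
    tnorm (mulComp (tprod ℝ a) (tprod ℝ b)) ≤ (∏ i, ‖a i‖) * ∏ i, ‖b i‖ := by
  rw [mulComp_tprod_tprod, tnorm]
  refine (projectiveSeminorm_tprod_le _).trans (le_of_eq ?_)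
  rw [Equiv.prod_comp finSumFinEquiv.symm (fun j => ‖Sum.elim a b j‖), Fintype.prod_sum_type]
  rfl

lemma tnorm_nonneg {n : ℕ} (x : TComp V n) : 0 ≤ tnorm x :=
  apply_nonneg projectiveSeminorm x

lemma tnorm_add_le {n : ℕ} (x y : TComp V n) : tnorm (x + y) ≤ tnorm x + tnorm y :=
  map_add_le_add projectiveSeminorm x y

lemma tnorm_smul {n : ℕ} (c : ℝ) (x : TComp V n) : tnorm (c • x) = ‖c‖ * tnorm x :=
  map_smul_eq_mul projectiveSeminorm c x

lemma tnorm_zero {n : ℕ} : tnorm (0 : TComp V n) = 0 :=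
  map_zero projectiveSeminorm

lemma tnorm_mul_tprod_left_le {k m : ℕ} (a : Fin k → V) (y : TComp V m) :
    tnorm (mulComp (tprod ℝ a) y) ≤ (∏ i, ‖a i‖) * tnorm y := by
  have ha : 0 ≤ ∏ i, ‖a i‖ := Finset.prod_nonneg fun _ _ => norm_nonneg _
  have key : ∀ (L : List (ℝ × (Fin m → V))) (y : TComp V m),
      (List.map (fun c => c.1 • tprod ℝ c.2) L).sum = y →
      tnorm (mulComp (tprod ℝ a) y) ≤ (∏ i, ‖a i‖) *
        (List.map (fun c => ‖c.1‖ * ∏ i, ‖c.2 i‖) L).sum := by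
    intro L
    induction L with
    | nil =>
      intro y hy
      have : y = 0 := by simpa using hy.symm
      subst this
      simp [mulComp_zero_right, tnorm_zero]
    | cons c L ih =>
      intro y hy
      rw [List.map_cons, List.sum_cons] at hy
      rw [← hy, mulComp_add_right, List.map_cons, List.sum_cons, mul_add]
      refine (tnorm_add_le _ _).trans (add_le_add ?_ (ih _ rfl))
      rw [mulComp_smul_right, tnorm_smul]
      calc ‖c.1‖ * tnorm (mulComp (tprod ℝ a) (tprod ℝ c.2))
          ≤ ‖c.1‖ * ((∏ i, ‖a i‖) * ∏ i, ‖c.2 i‖) :=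
            mul_le_mul_of_nonneg_left (tnorm_mul_tprod_tprod_le a c.2) (norm_nonneg _)
        _ = (∏ i, ‖a i‖) * (‖c.1‖ * ∏ i, ‖c.2 i‖) := by ring
  conv_rhs => rw [tnorm, projectiveSeminorm_apply y]
  letI := nonempty_subtype.mpr (nonempty_lifts y)
  rw [Real.mul_iInf_of_nonneg ha]
  refine le_ciInf fun ⟨q, hq⟩ => ?_
  exact key q y ((mem_lifts_iff y q).mp hq)

lemma tnorm_mul_le {k m : ℕ} (x : TComp V k) (y : TComp V m) :
    tnorm (mulComp x y) ≤ tnorm x * tnorm y := by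
  have key : ∀ (L : List (ℝ × (Fin k → V))) (x : TComp V k),
      (List.map (fun c => c.1 • tprod ℝ c.2) L).sum = x →
      tnorm (mulComp x y) ≤ (List.map (fun c => ‖c.1‖ * ∏ i, ‖c.2 i‖) L).sum * tnorm y := by
    intro L
    induction L with
    | nil =>
      intro x hx
      have : x = 0 := by simpa using hx.symm
      subst this
      simp [mulComp_zero_left, tnorm_zero]
    | cons c L ih =>
      intro x hx
      rw [List.map_cons, List.sum_cons] at hx
      rw [← hx, mulComp_add_left, List.map_cons, List.sum_cons, add_mul]
      refine (tnorm_add_le _ _).trans (add_le_add ?_ (ih _ rfl))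
      rw [mulComp_smul_left, tnorm_smul, mul_assoc]
      exact mul_le_mul_of_nonneg_left
        ((tnorm_mul_tprod_left_le c.2 y).trans (le_of_eq (by ring))) (norm_nonneg _)
  conv_rhs => rw [tnorm, projectiveSeminorm_apply x]
  letI := nonempty_subtype.mpr (nonempty_lifts x)
  rw [Real.iInf_mul_of_nonneg (tnorm_nonneg y)]
  refine le_ciInf fun ⟨q, hq⟩ => ?_
  exact key q x ((mem_lifts_iff x q).mp hq)

lemma tnorm_castComp {k m : ℕ} (h : k = m) (x : TComp V k) :
    tnorm (castComp h x) = tnorm x := by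
  rw [tnorm, tnorm, castComp, projectiveSeminorm_reindex]

lemma tnorm_seriesMul_le (ξ η : TSeries V) (n : ℕ) :
    tnorm (seriesMul ξ η n) ≤
      ∑ k ∈ Finset.range (n + 1), tnorm (ξ k) * tnorm (η (n - k)) := by
  rw [seriesMul]
  refine le_trans (seminorm_finset_sum_le projectiveSeminorm _ _) ?_
  rw [← Finset.sum_attach (Finset.range (n + 1)) (fun k => tnorm (ξ k) * tnorm (η (n - k)))]
  refine Finset.sum_le_sum fun k _ => ?_
  exact le_trans (le_of_eq (tnorm_castComp _ _)) (tnorm_mul_le _ _)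

lemma summable_comp_div {f : ℕ → ℝ} (hf : Summable f) (h0 : ∀ k, 0 ≤ f k) {q : ℕ}
    (hq : 0 < q) : Summable fun n => f (n / q) := by
  refine summable_of_sum_range_le (c := q * ∑' k, f k) (fun n => h0 _) fun N => ?_
  have hinj : ∀ x ∈ Finset.range N, ∀ y ∈ Finset.range N,
      (fun n => (n / q, n % q)) x = (fun n => (n / q, n % q)) y → x = y := by
    intro x _ y _ hxy
    simp only [Prod.mk.injEq] at hxy
    have hx := Nat.div_add_mod x q
    have hy := Nat.div_add_mod y q
    rw [← hx, ← hy, hxy.1, hxy.2]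
  calc ∑ n ∈ Finset.range N, f (n / q)
      = ∑ p ∈ (Finset.range N).image (fun n => (n / q, n % q)), f p.1 :=
        (Finset.sum_image (f := fun p : ℕ × ℕ => f p.1) hinj).symm
    _ ≤ ∑ p ∈ Finset.range N ×ˢ Finset.range q, f p.1 := by
        refine Finset.sum_le_sum_of_subset_of_nonneg ?_ (fun _ _ _ => h0 _)
        intro x hx
        simp only [Finset.mem_image, Finset.mem_range] at hx
        obtain ⟨n, hn, rfl⟩ := hx
        simp only [Finset.mem_product, Finset.mem_range]
        exact ⟨lt_of_le_of_lt (Nat.div_le_self n q) hn, Nat.mod_lt n hq⟩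
    _ = ∑ k ∈ Finset.range N, ∑ _r ∈ Finset.range q, f k := by
        rw [Finset.sum_product]
    _ = q * ∑ k ∈ Finset.range N, f k := by
        simp [Finset.sum_const, Finset.mul_sum]
    _ ≤ q * ∑' k, f k := by
        refine mul_le_mul_of_nonneg_left ?_ (Nat.cast_nonneg q)
        exact Summable.sum_le_tsum _ (fun _ _ => h0 _) hf

lemma factorial_le_gamma_div {p : ℝ} (hp : 1 ≤ p) {n q : ℕ} (hpq : p ≤ (q : ℝ))
    (hn : q ≤ n) :
    ((n / q).factorial : ℝ) ≤ Real.Gamma ((n : ℝ) / p + 1) := by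
  have hp0 : 0 < p := lt_of_lt_of_le one_pos hp
  set k := ⌊(n : ℝ) / p⌋₊ with hk
  have hnp1 : (1 : ℝ) ≤ (n : ℝ) / p := by
    rw [le_div_iff₀ hp0, one_mul]
    calc p ≤ (q : ℝ) := hpq
      _ ≤ (n : ℝ) := Nat.cast_le.mpr hn
  have hk1 : 1 ≤ k := Nat.le_floor (by exact_mod_cast hnp1)
  have hkle : (k : ℝ) ≤ (n : ℝ) / p := Nat.floor_le (by positivity)
  have hnq : (n / q : ℕ) ≤ k := by
    refine Nat.le_floor ?_
    calc ((n / q : ℕ) : ℝ) ≤ (n : ℝ) / (q : ℝ) := Nat.cast_div_le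
      _ ≤ (n : ℝ) / p := by
        apply div_le_div_of_nonneg_left (Nat.cast_nonneg n) hp0 hpq
  calc ((n / q).factorial : ℝ) ≤ (k.factorial : ℝ) :=
        Nat.cast_le.mpr (Nat.factorial_le hnq)
    _ = Real.Gamma ((k : ℝ) + 1) := (Real.Gamma_nat_eq_factorial k).symm
    _ ≤ Real.Gamma ((n : ℝ) / p + 1) := by
        refine Real.Gamma_strictMonoOn_Ici.monotoneOn ?_ ?_ (by linarith)
        · simp only [Set.mem_Ici]
          have : (1 : ℝ) ≤ (k : ℝ) := by exact_mod_cast hk1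
          linarith
        · simp only [Set.mem_Ici]
          linarith

lemma summable_gbound (g : TSeries V) {C ω p : ℝ} (hC : 0 < C) (hω : 0 < ω) (hp : 1 ≤ p)
    (hg : ∀ n : ℕ, 1 ≤ n →
      tnorm (g n) ≤ C * ω ^ ((n : ℝ) / p) / Real.Gamma ((n : ℝ) / p + 1))
    {z : ℝ} (hz : 0 < z) : Summable fun n => tnorm (g n) * z ^ n := by
  have hp0 : 0 < p := lt_of_lt_of_le one_pos hp
  have hC0 : 0 ≤ C := hC.le
  set q := ⌈p⌉₊ with hqdef
  have hq0 : 0 < q := Nat.ceil_pos.mpr hp0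
  have hpq : p ≤ (q : ℝ) := Nat.le_ceil p
  set M := max ω 1 with hM
  set R := max (M * z) 1 with hR
  have hM1 : (1 : ℝ) ≤ M := le_max_right _ _
  have hR1 : (1 : ℝ) ≤ R := le_max_right _ _
  have hR0 : (0 : ℝ) < R := lt_of_lt_of_le one_pos hR1
  set t := R ^ q with ht
  have ht0 : (0 : ℝ) < t := pow_pos hR0 q
  have hdom : Summable (fun n : ℕ => (C * t) * (t ^ (n / q) / (n / q).factorial)) := by
    refine Summable.mul_left _ ?_
    exact summable_comp_div (Real.summable_pow_div_factorial t)
      (fun k => div_nonneg (pow_nonneg ht0.le _) (Nat.cast_nonneg _)) hq0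
  rw [← summable_nat_add_iff q]
  refine Summable.of_nonneg_of_le
    (fun m => mul_nonneg (tnorm_nonneg _) (pow_nonneg hz.le _)) ?_
    ((summable_nat_add_iff q).mpr hdom)
  intro m
  set n := m + q with hn
  have hnq : q ≤ n := by omega
  have hn1 : 1 ≤ n := le_trans hq0 hnq
  have hΓpos : 0 < Real.Gamma ((n : ℝ) / p + 1) := Real.Gamma_pos_of_pos (by positivity)
  have hfacΓ : ((n / q).factorial : ℝ) ≤ Real.Gamma ((n : ℝ) / p + 1) :=
    factorial_le_gamma_div hp hpq hnq
  have hfacpos : (0 : ℝ) < ((n / q).factorial : ℝ) := by exact_mod_cast (n / q).factorial_pos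
  have hωM : ω ^ ((n : ℝ) / p) ≤ M ^ n := by
    calc ω ^ ((n : ℝ) / p) ≤ M ^ ((n : ℝ) / p) :=
          Real.rpow_le_rpow hω.le (le_max_left _ _) (by positivity)
      _ ≤ M ^ ((n : ℝ)) :=
          Real.rpow_le_rpow_of_exponent_le hM1 (div_le_self (Nat.cast_nonneg n) hp)
      _ = M ^ n := Real.rpow_natCast M n
  have hRn : R ^ n ≤ t * t ^ (n / q) := by
    have hle : n ≤ q * (n / q) + q := by
      have := Nat.div_add_mod n q
      have := Nat.mod_lt n hq0
      omega
    calc R ^ n ≤ R ^ (q * (n / q) + q) := pow_le_pow_right₀ hR1 hle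
      _ = t ^ (n / q) * t := by rw [pow_add, pow_mul]
      _ = t * t ^ (n / q) := mul_comm _ _
  calc tnorm (g n) * z ^ n
      ≤ (C * ω ^ ((n : ℝ) / p) / Real.Gamma ((n : ℝ) / p + 1)) * z ^ n :=
        mul_le_mul_of_nonneg_right (hg n hn1) (pow_nonneg hz.le n)
    _ = C * ω ^ ((n : ℝ) / p) * z ^ n / Real.Gamma ((n : ℝ) / p + 1) := by ring
    _ ≤ C * M ^ n * z ^ n / ((n / q).factorial : ℝ) := by
        refine div_le_div₀ ?_ ?_ hfacpos hfacΓ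
        · positivity
        · have : 0 ≤ z ^ n := pow_nonneg hz.le n
          have hωn : 0 ≤ ω ^ ((n : ℝ) / p) := (Real.rpow_pos_of_pos hω _).le
          nlinarith [mul_le_mul_of_nonneg_right hωM this]
    _ = C * (M * z) ^ n / ((n / q).factorial : ℝ) := by rw [mul_pow]; ring
    _ ≤ C * R ^ n / ((n / q).factorial : ℝ) := by
        refine (div_le_div_iff_of_pos_right hfacpos).mpr ?_
        refine mul_le_mul_of_nonneg_left ?_ hC0
        exact pow_le_pow_left₀ (by positivity) (le_max_left _ _) n
    _ ≤ C * (t * t ^ (n / q)) / ((n / q).factorial : ℝ) := by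
        refine (div_le_div_iff_of_pos_right hfacpos).mpr ?_
        exact mul_le_mul_of_nonneg_left hRn hC0
    _ = (C * t) * (t ^ (n / q) / ((n / q).factorial : ℝ)) := by ring

end Aux

/-- Let `ξ ∈ T₀((V))` (i.e. `ξ₀ = 0`) have infinite radius of
convergence (`Σ ‖ξₙ‖ zⁿ` converges for every `z`), and let `g₁, g₂ ∈ T₁((V))` satisfy
factorial decay `‖πₙ(gᵢ)‖ ≤ C ω^{n/p}/(n/p)!` for all `n ≥ 1`.  Then the tensor
series `g₁ ⊗ ξ ⊗ g₂` also has infinite radius of convergence: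
`limsup_{n→∞} ‖πₙ(g₁ ⊗ ξ ⊗ g₂)‖^{1/n} = 0`. -/
theorem conjugated_series_infinite_radius
    (ξ g₁ g₂ : TSeries V)
    (hξ0 : ξ 0 = 0)
    (hg₁0 : g₁ 0 = oneComp) (hg₂0 : g₂ 0 = oneComp)
    (hξ : ∀ z : ℝ, Summable fun n => tnorm (ξ n) * z ^ n)
    (C ω p : ℝ) (hC : 0 < C) (hω : 0 < ω) (hp : 1 ≤ p)
    (hg₁ : ∀ n : ℕ, 1 ≤ n →
      tnorm (g₁ n) ≤ C * ω ^ ((n : ℝ) / p) / Real.Gamma ((n : ℝ) / p + 1))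
    (hg₂ : ∀ n : ℕ, 1 ≤ n →
      tnorm (g₂ n) ≤ C * ω ^ ((n : ℝ) / p) / Real.Gamma ((n : ℝ) / p + 1)) :
    Filter.limsup
      (fun n : ℕ => tnorm (seriesMul (seriesMul g₁ ξ) g₂ n) ^ ((1 : ℝ) / n))
      Filter.atTop = 0 := by
  classical
  set D : ℕ → ℝ := fun n => tnorm (seriesMul (seriesMul g₁ ξ) g₂ n) with hD
  have hD0 : ∀ n, 0 ≤ D n := fun n => tnorm_nonneg _
  have main : ∀ z : ℝ, 0 < z → ∃ N : ℕ, ∀ n ≥ N, D n ≤ (1 / z) ^ n := by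
    intro z hz
    set u : ℕ → ℝ := fun n => tnorm (g₁ n) * z ^ n with hu
    set v : ℕ → ℝ := fun n => tnorm (ξ n) * z ^ n with hv
    set w : ℕ → ℝ := fun n => tnorm (g₂ n) * z ^ n with hw
    have hun : ∀ n, 0 ≤ u n := fun n => mul_nonneg (tnorm_nonneg _) (pow_nonneg hz.le _)
    have hvn : ∀ n, 0 ≤ v n := fun n => mul_nonneg (tnorm_nonneg _) (pow_nonneg hz.le _)
    have hwn : ∀ n, 0 ≤ w n := fun n => mul_nonneg (tnorm_nonneg _) (pow_nonneg hz.le _)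
    have hsu : Summable u := summable_gbound g₁ hC hω hp hg₁ hz
    have hsv : Summable v := hξ z
    have hsw : Summable w := summable_gbound g₂ hC hω hp hg₂ hz
    set c : ℕ → ℝ := fun n => ∑ k ∈ Finset.range (n + 1), u k * v (n - k) with hc
    have hcn : ∀ n, 0 ≤ c n := fun n =>
      Finset.sum_nonneg fun k _ => mul_nonneg (hun _) (hvn _)
    have hsc : Summable fun n => ‖c n‖ :=
      summable_norm_sum_mul_range_of_summable_norm
        (hsu.congr fun n => (Real.norm_of_nonneg (hun n)).symm)
        (hsv.congr fun n => (Real.norm_of_nonneg (hvn n)).symm)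
    set T : ℕ → ℝ := fun n => ∑ k ∈ Finset.range (n + 1), c k * w (n - k) with hT
    have hsT : Summable T :=
      (summable_norm_sum_mul_range_of_summable_norm hsc
        (hsw.congr fun n => (Real.norm_of_nonneg (hwn n)).symm)).of_norm
    have hTend : Filter.Tendsto T Filter.atTop (nhds 0) := hsT.tendsto_atTop_zero
    have hev : ∀ᶠ n in Filter.atTop, T n < 1 := hTend.eventually_lt_const one_pos
    obtain ⟨N, hN⟩ := Filter.eventually_atTop.mp hev
    refine ⟨N, fun n hn => ?_⟩
    have hbound : D n * z ^ n ≤ T n := by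
      calc D n * z ^ n
          ≤ (∑ k ∈ Finset.range (n + 1),
              tnorm (seriesMul g₁ ξ k) * tnorm (g₂ (n - k))) * z ^ n :=
            mul_le_mul_of_nonneg_right (tnorm_seriesMul_le _ _ n) (pow_nonneg hz.le n)
        _ = ∑ k ∈ Finset.range (n + 1),
              (tnorm (seriesMul g₁ ξ k) * z ^ k) * w (n - k) := by
            rw [Finset.sum_mul]
            refine Finset.sum_congr rfl fun k hk => ?_
            have hkn : k ≤ n := Nat.lt_succ_iff.mp (Finset.mem_range.mp hk)
            have hz' : z ^ n = z ^ k * z ^ (n - k) := by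
              rw [← pow_add]; congr 1; omega
            rw [hz', hw]; ring
        _ ≤ ∑ k ∈ Finset.range (n + 1), c k * w (n - k) := by
            refine Finset.sum_le_sum fun k hk => ?_
            refine mul_le_mul_of_nonneg_right ?_ (hwn _)
            calc tnorm (seriesMul g₁ ξ k) * z ^ k
                ≤ (∑ j ∈ Finset.range (k + 1),
                    tnorm (g₁ j) * tnorm (ξ (k - j))) * z ^ k :=
                  mul_le_mul_of_nonneg_right (tnorm_seriesMul_le _ _ k) (pow_nonneg hz.le k)
              _ = ∑ j ∈ Finset.range (k + 1), u j * v (k - j) := by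
                  rw [Finset.sum_mul]
                  refine Finset.sum_congr rfl fun j hj => ?_
                  have hjk : j ≤ k := Nat.lt_succ_iff.mp (Finset.mem_range.mp hj)
                  have hz' : z ^ k = z ^ j * z ^ (k - j) := by
                    rw [← pow_add]; congr 1; omega
                  rw [hz', hu, hv]; ring
              _ = c k := rfl
        _ = T n := rfl
    rw [one_div_pow, le_div_iff₀ (pow_pos hz n)]
    exact hbound.trans (hN n hn).le
  have htend : Filter.Tendsto (fun n : ℕ => D n ^ ((1 : ℝ) / n)) Filter.atTop (nhds 0) := by
    rw [Metric.tendsto_atTop]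
    intro ε hε
    obtain ⟨N, hN⟩ := main (2 / ε) (by positivity)
    refine ⟨max N 1, fun n hn => ?_⟩
    have hn1 : 1 ≤ n := le_trans (le_max_right _ _) hn
    have hnN : N ≤ n := le_trans (le_max_left _ _) hn
    have h1 : D n ^ ((1 : ℝ) / n) ≤ ((1 / (2 / ε)) ^ n) ^ ((1 : ℝ) / n) :=
      Real.rpow_le_rpow (hD0 n) (hN n hnN) (by positivity)
    have h2 : (((1 / (2 / ε)) ^ n : ℝ)) ^ ((1 : ℝ) / n) = 1 / (2 / ε) := by
      have hne : ((n : ℝ)) ≠ 0 := Nat.cast_ne_zero.mpr (by omega)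
      rw [← Real.rpow_natCast (1 / (2 / ε)) n, ← Real.rpow_mul (by positivity), mul_one_div,
        div_self hne, Real.rpow_one]
    rw [Real.dist_eq, sub_zero, abs_of_nonneg (Real.rpow_nonneg (hD0 n) _)]
    calc D n ^ ((1 : ℝ) / n) ≤ 1 / (2 / ε) := h1.trans h2.le
      _ = ε / 2 := one_div_div 2 ε
      _ < ε := half_lt_self hε
  exact htend.limsup_eq

end
end

section
/- Let γ = (x_t, y_t) be a continuous bounded-variation path in ℝ² with γ₀ = (0,0), γ₁ = (1,0). If ∫₀¹ e^{2kπi x_s + λ i y_s} dy_s = 0 for all k ∈ ℤ and all λ ∈ ℝ, then for every continuous function g : ℝ² → ℂ that is 1-periodic in the first variable, ∫₀¹ g(x_s, y_s) dy_s = 0. -/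
open MeasureTheory Set Complex

noncomputable section PIVaux

open scoped Real

variable (a b : ℝ)

local notation "XX" => (AddCircle (1:ℝ) × (Set.Icc a b))

/-- `exp (l i w)` in the second coordinate. -/
def pivExpSnd (l : ℝ) : C(AddCircle (1:ℝ) × (Set.Icc a b), ℂ) :=
  ⟨fun p => Complex.exp (l * Complex.I * ((p.2 : ℝ) : ℂ)),
    Complex.continuous_exp.comp <| by fun_prop⟩

/-- The generator `e^{2πik x} e^{i l y}`. -/
def pivGen (k : ℤ) (l : ℝ) : C(AddCircle (1:ℝ) × (Set.Icc a b), ℂ) :=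
  ((fourier k).comp ⟨Prod.fst, continuous_fst⟩) * pivExpSnd a b l

lemma pivGen_apply (k : ℤ) (l : ℝ) (p : AddCircle (1:ℝ) × (Set.Icc a b)) :
    pivGen a b k l p = fourier k p.1 * Complex.exp (l * Complex.I * ((p.2 : ℝ) : ℂ)) := rfl

lemma pivGen_mul (k k' : ℤ) (l l' : ℝ) :
    pivGen a b k l * pivGen a b k' l' = pivGen a b (k + k') (l + l') := by
  ext p
  simp only [ContinuousMap.mul_apply, pivGen_apply, fourier_add]
  push_cast
  rw [show ((l:ℂ) + l') * Complex.I * ((p.2:ℝ):ℂ) = l * Complex.I * ((p.2:ℝ):ℂ) + l' * Complex.I * ((p.2:ℝ):ℂ) by ring, Complex.exp_add]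
  ring

lemma pivGen_one : pivGen a b 0 0 = 1 := by
  ext p
  simp [pivGen_apply, fourier_zero]

lemma pivGen_star (k : ℤ) (l : ℝ) : star (pivGen a b k l) = pivGen a b (-k) (-l) := by
  ext p
  simp only [ContinuousMap.star_apply, pivGen_apply, star_mul', RingHom.coe_coe]
  rw [fourier_neg]
  congr 1
  have : star (Complex.exp (l * Complex.I * ((p.2 : ℝ) : ℂ)))
      = (starRingEnd ℂ) (Complex.exp (l * Complex.I * ((p.2 : ℝ) : ℂ))) := rfl
  rw [this, ← Complex.exp_conj]
  congr 1
  simp only [map_mul, Complex.conj_I, Complex.conj_ofReal]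
  push_cast
  ring

/-- The set of generators. -/
def pivS : Set C(AddCircle (1:ℝ) × (Set.Icc a b), ℂ) :=
  {f | ∃ k l, pivGen a b k l = f}

/-- The star subalgebra spanned by the generators. -/
def pivA : StarSubalgebra ℂ C(AddCircle (1:ℝ) × (Set.Icc a b), ℂ) where
  carrier := Submodule.span ℂ (pivS a b)
  mul_mem' := by
    intro f g hf hg
    have h := Submodule.mul_mem_mul hf hg
    rw [Submodule.span_mul_span] at h
    refine Submodule.span_le.mpr ?_ h
    rintro u hu
    rw [Set.mem_mul] at hu
    obtain ⟨f, ⟨k, l, rfl⟩, g, ⟨k', l', rfl⟩, rfl⟩ := hu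
    rw [pivGen_mul]
    exact Submodule.subset_span ⟨_, _, rfl⟩
  one_mem' := Submodule.subset_span ⟨0, 0, pivGen_one a b⟩
  add_mem' := fun hf hg => Submodule.add_mem _ hf hg
  zero_mem' := Submodule.zero_mem _
  algebraMap_mem' := fun c => by
    have : (algebraMap ℂ C(AddCircle (1:ℝ) × (Set.Icc a b), ℂ)) c = c • 1 := by
      simp [Algebra.algebraMap_eq_smul_one]
    rw [this]
    exact Submodule.smul_mem _ _ (Submodule.subset_span ⟨0, 0, pivGen_one a b⟩)
  star_mem' := by
    intro f hf
    induction hf using Submodule.span_induction with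
    | mem f hf =>
      obtain ⟨k, l, rfl⟩ := hf
      rw [pivGen_star]
      exact Submodule.subset_span ⟨_, _, rfl⟩
    | zero => simp only [star_zero]; exact Submodule.zero_mem _
    | add f g _ _ hf hg => rw [star_add]; exact Submodule.add_mem _ hf hg
    | smul c f _ hf => rw [star_smul]; exact Submodule.smul_mem _ _ hf

lemma pivA_separatesPoints : (pivA a b).SeparatesPoints := by
  rintro ⟨z1, w1⟩ ⟨z2, w2⟩ hne
  by_cases hz : z1 = z2
  · -- second coordinates differ
    have hw : (w1 : ℝ) ≠ (w2 : ℝ) := by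
      intro h
      exact hne (by rw [hz, Prod.mk.injEq]; exact ⟨rfl, Subtype.ext h⟩)
    refine ⟨_, ⟨pivGen a b 0 (Real.pi / ((w1 : ℝ) - (w2 : ℝ))),
      Submodule.subset_span ⟨_, _, rfl⟩, rfl⟩, ?_⟩
    simp only [pivGen_apply, fourier_zero, one_mul]
    intro hEq
    set l : ℝ := Real.pi / ((w1 : ℝ) - (w2 : ℝ))
    have hsub : (w1 : ℝ) - (w2 : ℝ) ≠ 0 := sub_ne_zero.mpr hw
    have h1 : Complex.exp (l * Complex.I * ((w1 : ℝ) : ℂ) - l * Complex.I * ((w2 : ℝ) : ℂ)) = 1 := by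
      rw [Complex.exp_sub, hEq, div_self (Complex.exp_ne_zero _)]
    rw [Complex.exp_eq_one_iff] at h1
    obtain ⟨n, hn⟩ := h1
    have hlr : l * ((w1 : ℝ) - (w2 : ℝ)) = Real.pi := by
      show Real.pi / ((w1 : ℝ) - (w2 : ℝ)) * ((w1 : ℝ) - (w2 : ℝ)) = Real.pi
      exact div_mul_cancel₀ _ hsub
    have hn2 : ((l * ((w1 : ℝ) - (w2 : ℝ)) : ℝ) : ℂ) * Complex.I = n * (2 * Real.pi * Complex.I) := by
      push_cast
      linear_combination hn
    rw [hlr] at hn2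
    have hI : (Real.pi : ℂ) = (n : ℂ) * (2 * Real.pi) := by
      have h3 : ((Real.pi : ℂ)) * Complex.I = ((n : ℂ) * (2 * Real.pi)) * Complex.I := by
        linear_combination hn2
      exact mul_right_cancel₀ Complex.I_ne_zero h3
    have hR : Real.pi = (n : ℝ) * (2 * Real.pi) := by exact_mod_cast hI
    have h1' : (1 : ℝ) = 2 * (n : ℝ) := by
      have hpi := Real.pi_ne_zero
      have : Real.pi * (1 - 2 * (n : ℝ)) = 0 := by ring_nf; linarith [hR]
      rcases mul_eq_zero.mp this with h | h
      · exact absurd h hpi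
      · linarith
    have : (1 : ℤ) = 2 * n := by exact_mod_cast h1'
    omega
  · -- first coordinates differ
    refine ⟨_, ⟨pivGen a b 1 0, Submodule.subset_span ⟨_, _, rfl⟩, rfl⟩, ?_⟩
    simp only [pivGen_apply]
    simp only [Complex.ofReal_zero, zero_mul, Complex.exp_zero, mul_one]
    intro hEq
    apply hz
    have h1 : AddCircle.toCircle ((1 : ℤ) • z1 : AddCircle (1:ℝ)) = AddCircle.toCircle ((1 : ℤ) • z2 : AddCircle (1:ℝ)) := by
      have := hEq
      rw [fourier_apply, fourier_apply] at this
      exact_mod_cast Subtype.ext this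
    simpa using AddCircle.injective_toCircle one_ne_zero h1

end PIVaux

/-- Let `γ = (x,y)` be a continuous bounded-variation path in `ℝ²`
with `γ₀ = (0,0)`, `γ₁ = (1,0)`.  The (signed) Lebesgue–Stieltjes measure `dy` is
encoded by a finite measure `ν` together with a density `gy` (so that
`∫_{[a,b]} gy dν = y_b − y_a`), and `∫₀¹ f dy := ∫_{[0,1]} f·gy dν`.
If `∫₀¹ e^{2kπi x_s + λ i y_s} dy_s = 0` for all `k ∈ ℤ` and all `λ ∈ ℝ`, then
`∫₀¹ g(x_s, y_s) dy_s = 0` for every continuous `g : ℝ² → ℂ` that is `1`-periodic in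
its first variable. -/
theorem periodic_integrals_vanish
    (x y : ℝ → ℝ)
    (hx : ContinuousOn x (Icc 0 1)) (hy : ContinuousOn y (Icc 0 1))
    (hx0 : x 0 = 0) (hy0 : y 0 = 0) (hx1 : x 1 = 1) (hy1 : y 1 = 0)
    (ν : Measure ℝ) [IsFiniteMeasure ν] (gy : ℝ → ℝ)
    (hgy : Integrable gy (ν.restrict (Icc 0 1)))
    (hlink : ∀ a b : ℝ, 0 ≤ a → a ≤ b → b ≤ 1 →
      ∫ t in Icc a b, gy t ∂ν = y b - y a)
    (hint : ∀ (k : ℤ) (l : ℝ),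
      ∫ t in Icc (0 : ℝ) 1,
          Complex.exp (2 * k * Real.pi * Complex.I * (x t) + l * Complex.I * (y t))
            * (gy t : ℂ) ∂ν = 0)
    (g : ℝ × ℝ → ℂ) (hg : Continuous g)
    (hper : ∀ a b : ℝ, g (a + 1, b) = g (a, b)) :
    ∫ t in Icc (0 : ℝ) 1, g (x t, y t) * (gy t : ℂ) ∂ν = 0 := by
  haveI : Fact ((0:ℝ) < 1) := ⟨one_pos⟩
  obtain ⟨M, hM⟩ := isCompact_Icc.exists_bound_of_continuousOn hy
  set a : ℝ := -(max M 0) with ha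
  set b : ℝ := max M 0 with hb
  have hab : a ≤ b := by
    have : (0:ℝ) ≤ max M 0 := le_max_right _ _
    simp only [ha, hb]; linarith
  have hmem : ∀ t ∈ Icc (0:ℝ) 1, y t ∈ Icc a b := by
    intro t ht
    have h1 := hM t ht
    rw [Real.norm_eq_abs, abs_le] at h1
    constructor
    · have : -(max M 0) ≤ -M := by simp [neg_le_neg_iff, le_max_left]
      exact le_trans this h1.1
    · exact le_trans h1.2 (le_max_left _ _)
  set pt : ℝ → AddCircle (1:ℝ) × (Set.Icc a b) :=
    fun t => (↑(x t), Set.projIcc a b hab (y t)) with hptdef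
  have hpt : ContinuousOn pt (Icc (0:ℝ) 1) :=
    ((AddCircle.continuous_mk' 1).comp_continuousOn hx).prodMk
      (continuous_projIcc.comp_continuousOn hy)
  -- integrability
  have hInt : ∀ f : C(AddCircle (1:ℝ) × (Set.Icc a b), ℂ),
      Integrable (fun t => f (pt t) * ((gy t : ℝ) : ℂ)) (ν.restrict (Icc 0 1)) := by
    intro f
    refine Integrable.bdd_mul (c := ‖f‖) hgy.ofReal ?_ (Filter.Eventually.of_forall fun t => f.norm_coe_le_norm _)
    exact (f.continuous.comp_continuousOn hpt).aestronglyMeasurable measurableSet_Icc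
  -- the generators integrate to zero
  have hgen0 : ∀ (k : ℤ) (l : ℝ),
      ∫ t in Icc (0:ℝ) 1, (pivGen a b k l) (pt t) * ((gy t : ℝ) : ℂ) ∂ν = 0 := by
    intro k l
    rw [← hint k l]
    apply setIntegral_congr_fun measurableSet_Icc
    intro t ht
    have hyt := hmem t ht
    simp only [hptdef, pivGen_apply, Set.projIcc_of_mem hab hyt]
    rw [fourier_coe_apply, ← Complex.exp_add]
    congr 1
    push_cast
    rw [div_one]
    ring
  -- the whole span integrates to zero
  have hspan : ∀ f ∈ Submodule.span ℂ (pivS a b),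
      ∫ t in Icc (0:ℝ) 1, f (pt t) * ((gy t : ℝ) : ℂ) ∂ν = 0 := by
    intro f hf
    induction hf using Submodule.span_induction with
    | mem f hf => obtain ⟨k, l, rfl⟩ := hf; exact hgen0 k l
    | zero => simp
    | add f f' hf hf' ihf ihf' =>
      simp only [ContinuousMap.add_apply, add_mul]
      rw [integral_add (hInt f) (hInt f'), ihf, ihf', add_zero]
    | smul c f hf ih =>
      simp only [ContinuousMap.smul_apply, smul_eq_mul, mul_assoc]
      rw [integral_const_mul, ih, mul_zero]
  -- the descended function G
  have hper' : ∀ w : ℝ, Function.Periodic (fun u => g (u, w)) 1 := fun w u => hper u w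
  set Gfun : AddCircle (1:ℝ) × (Set.Icc a b) → ℂ :=
    fun p => (hper' ((p.2 : ℝ))).lift p.1 with hGdef
  have hq : IsOpenQuotientMap
      (Prod.map (QuotientAddGroup.mk : ℝ → AddCircle (1:ℝ)) (id : Set.Icc a b → Set.Icc a b)) :=
    QuotientAddGroup.isOpenQuotientMap_mk.prodMap IsOpenQuotientMap.id
  have hGq : (Gfun ∘ Prod.map (QuotientAddGroup.mk : ℝ → AddCircle (1:ℝ))
      (id : Set.Icc a b → Set.Icc a b)) = fun p : ℝ × Set.Icc a b => g (p.1, (p.2 : ℝ)) := by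
    funext p
    exact Function.Periodic.lift_coe (hper' ((p.2 : ℝ))) p.1
  have hGc : Continuous Gfun := by
    rw [hq.isQuotientMap.continuous_iff, hGq]
    exact hg.comp (continuous_fst.prodMk (continuous_subtype_val.comp continuous_snd))
  set G : C(AddCircle (1:ℝ) × (Set.Icc a b), ℂ) := ⟨Gfun, hGc⟩ with hGdef2
  have hGeval : ∀ t ∈ Icc (0:ℝ) 1, G (pt t) = g (x t, y t) := by
    intro t ht
    show Gfun (pt t) = _
    simp only [hGdef, hptdef, Set.projIcc_of_mem hab (hmem t ht)]
    exact Function.Periodic.lift_coe (hper' (y t)) (x t)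
  -- density
  have htop := ContinuousMap.starSubalgebra_topologicalClosure_eq_top_of_separatesPoints
    (pivA a b) (pivA_separatesPoints a b)
  have hGmem : G ∈ closure ((pivA a b : Set C(AddCircle (1:ℝ) × (Set.Icc a b), ℂ))) := by
    have : G ∈ (pivA a b).topologicalClosure := htop ▸ trivial
    exact this
  -- the epsilon argument
  set C : ℝ := ∫ t in Icc (0:ℝ) 1, |gy t| ∂ν with hCdef
  have hC0 : 0 ≤ C := integral_nonneg fun t => abs_nonneg _
  have key : ∀ ε > 0, ‖∫ t in Icc (0:ℝ) 1, G (pt t) * ((gy t : ℝ) : ℂ) ∂ν‖ ≤ ε * C := by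
    intro ε hε
    obtain ⟨p, hpA, hpd⟩ := Metric.mem_closure_iff.mp hGmem ε hε
    have h0 := hspan p hpA
    have hsub : ∫ t in Icc (0:ℝ) 1, (G - p) (pt t) * ((gy t : ℝ) : ℂ) ∂ν
        = ∫ t in Icc (0:ℝ) 1, G (pt t) * ((gy t : ℝ) : ℂ) ∂ν := by
      simp only [ContinuousMap.sub_apply, sub_mul]
      rw [integral_sub (hInt G) (hInt p), h0, sub_zero]
    rw [← hsub]
    calc ‖∫ t in Icc (0:ℝ) 1, (G - p) (pt t) * ((gy t : ℝ) : ℂ) ∂ν‖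
        ≤ ∫ t in Icc (0:ℝ) 1, ‖(G - p) (pt t) * ((gy t : ℝ) : ℂ)‖ ∂ν :=
          norm_integral_le_integral_norm _
      _ ≤ ∫ t in Icc (0:ℝ) 1, ε * |gy t| ∂ν := by
          apply integral_mono (hInt (G - p)).norm (hgy.abs.const_mul ε)
          intro t
          dsimp only
          rw [norm_mul, Complex.norm_real, Real.norm_eq_abs]
          apply mul_le_mul_of_nonneg_right _ (abs_nonneg _)
          exact le_trans ((G - p).norm_coe_le_norm _) (le_of_lt (dist_eq_norm G p ▸ hpd))
      _ = ε * C := by rw [hCdef, integral_const_mul]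
  have hzero : ∫ t in Icc (0:ℝ) 1, G (pt t) * ((gy t : ℝ) : ℂ) ∂ν = 0 := by
    by_contra hne
    set r : ℝ := ‖∫ t in Icc (0:ℝ) 1, G (pt t) * ((gy t : ℝ) : ℂ) ∂ν‖ with hr
    have hrpos : 0 < r := norm_pos_iff.mpr hne
    have hkey := key (r / (2 * (C + 1))) (by positivity)
    have h2 : (0:ℝ) < 2 * (C + 1) := by positivity
    have h3 : r / (2 * (C + 1)) * C = r * C / (2 * (C + 1)) := by ring
    rw [h3] at hkey
    have h4 : r * (2 * (C + 1)) ≤ r * C := (le_div_iff₀ h2).mp hkey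
    nlinarith [hC0, hrpos]
  rw [← hzero]
  apply setIntegral_congr_fun measurableSet_Icc
  intro t ht
  dsimp only
  rw [hGeval t ht]
end

section
/- Let γ : [0,K] → ℝ² be parametrised at unit speed, differentiable at s with |γ′_s| = 1, and let ε ∈ (0, 1/6]. Suppose T ∈ (s, K] satisfies, for all t ∈ (s, T]: |γ_t − γ_s − γ′_s (t − s)| ≤ ε(t − s) and ||γ_t − γ_s|/(t − s) − 1| ≤ ε. Then the normalised path 𝒜_{s,T}γ satisfies, for every t ∈ [s, T]: |(𝒜_{s,T}γ)_t²| ≤ (2ε/(1 − 3ε)) · (𝒜_{s,T}γ)_t¹, i.e. the image of 𝒜_{s,T}γ lies in the cone {(x,y) : |y| ≤ 2ε x/(1 − 3ε)}. -/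
noncomputable section

/-- The point `(1,0)` of the Euclidean plane. -/
def e₁ : EuclideanSpace ℝ (Fin 2) := (WithLp.equiv 2 (Fin 2 → ℝ)).symm ![1, 0]

lemma abs_coord_le {n : ℕ} (x : EuclideanSpace ℝ (Fin n)) (i : Fin n) : |x i| ≤ ‖x‖ := by
  rw [EuclideanSpace.norm_eq, ← Real.sqrt_sq_eq_abs]
  apply Real.sqrt_le_sqrt
  have := Finset.single_le_sum (f := fun j => ‖x j‖ ^ 2) (fun j _ => sq_nonneg _)
    (Finset.mem_univ i)
  simpa [Real.norm_eq_abs, sq_abs] using this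

/-- **cone lemma.** Let `γ : [0,K] → ℝ²` be parametrised at unit speed,
differentiable at `s` with `|γ′_s| = 1`, `ε ∈ (0,1/6]`, and `T ∈ (s,K]` with
`|γ_t − γ_s − γ′_s(t−s)| ≤ ε(t−s)` and `||γ_t − γ_s|/(t−s) − 1| ≤ ε` for `t ∈ (s,T]`.
Then the normalised path `𝒜_{s,T}γ` (where `𝒜_{s,T}(x) = |γ_T − γ_s|⁻¹ R(x − γ_s)`
and `R` rotates `γ_T − γ_s` to `(|γ_T − γ_s|,0)`) satisfies, for all `t ∈ [s,T]`,
`|(𝒜_{s,T}γ)_t²| ≤ (2ε/(1−3ε))·(𝒜_{s,T}γ)_t¹`: its image lies in the cone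
`{(x,y) : |y| ≤ 2εx/(1−3ε)}`. -/
theorem normalised_path_in_cone
    (K : ℝ) (γ : ℝ → EuclideanSpace ℝ (Fin 2))
    (hunit : LipschitzOnWith 1 γ (Set.Icc 0 K))
    (s : ℝ) (hs : s ∈ Set.Ico 0 K)
    (v : EuclideanSpace ℝ (Fin 2)) (hderiv : HasDerivAt γ v s) (hv : ‖v‖ = 1)
    (ε : ℝ) (hε : ε ∈ Set.Ioc 0 (1 / 6 : ℝ))
    (T : ℝ) (hT : T ∈ Set.Ioc s K)
    (h1 : ∀ t ∈ Set.Ioc s T, ‖γ t - γ s - (t - s) • v‖ ≤ ε * (t - s))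
    (h2 : ∀ t ∈ Set.Ioc s T, |‖γ t - γ s‖ / (t - s) - 1| ≤ ε)
    (R : EuclideanSpace ℝ (Fin 2) ≃ₗᵢ[ℝ] EuclideanSpace ℝ (Fin 2))
    (hR : R (γ T - γ s) = ‖γ T - γ s‖ • e₁) :
    ∀ t ∈ Set.Icc s T,
      |(WithLp.equiv 2 (Fin 2 → ℝ)) (‖γ T - γ s‖⁻¹ • R (γ t - γ s)) 1|
        ≤ (2 * ε / (1 - 3 * ε)) *
            (WithLp.equiv 2 (Fin 2 → ℝ)) (‖γ T - γ s‖⁻¹ • R (γ t - γ s)) 0 := by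
  intro t ht
  obtain ⟨hst, htT⟩ := ht
  obtain ⟨hεpos, hε6⟩ := hε
  rcases eq_or_lt_of_le hst with rfl | hst
  · simp
  set u := γ T - γ s with hu
  set w := γ t - γ s with hw
  have hTs : 0 < T - s := sub_pos.2 hT.1
  have hts : 0 < t - s := sub_pos.2 hst
  set l := (t - s) / (T - s) with hl
  have hlTs : l * (T - s) = t - s := div_mul_cancel₀ _ hTs.ne'
  have hlpos : 0 < l := div_pos hts hTs
  have h2T := h2 T ⟨hT.1, le_refl T⟩
  have hu_lb : (1 - ε) * (T - s) ≤ ‖u‖ := by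
    have h := (abs_le.1 h2T).1
    have h' : 1 - ε ≤ ‖u‖ / (T - s) := by linarith
    calc (1 - ε) * (T - s) ≤ (‖u‖ / (T - s)) * (T - s) := by nlinarith
      _ = ‖u‖ := div_mul_cancel₀ _ hTs.ne'
  have hu_pos : 0 < ‖u‖ := lt_of_lt_of_le (by nlinarith) hu_lb
  set d := w - l • u with hd
  have hd_norm : ‖d‖ ≤ 2 * ε * (t - s) := by
    have e1' := h1 t ⟨hst, htT⟩
    have e2' := h1 T ⟨hT.1, le_refl T⟩
    have key : d = (w - (t - s) • v) - l • (u - (T - s) • v) := by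
      rw [hd, show (t - s) = l * (T - s) from hlTs.symm]; module
    rw [key]
    calc ‖(w - (t - s) • v) - l • (u - (T - s) • v)‖
        ≤ ‖w - (t - s) • v‖ + ‖l • (u - (T - s) • v)‖ := norm_sub_le _ _
      _ = ‖w - (t - s) • v‖ + l * ‖u - (T - s) • v‖ := by
          rw [norm_smul, Real.norm_eq_abs, abs_of_pos hlpos]
      _ ≤ ε * (t - s) + l * (ε * (T - s)) := by
          have := mul_le_mul_of_nonneg_left e2' hlpos.le
          linarith
      _ = 2 * ε * (t - s) := by
          have : l * (ε * (T - s)) = ε * (l * (T - s)) := by ring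
          rw [this, hlTs]; ring
  have hRw : ∀ i : Fin 2, (R w) i = (R d) i + l * (‖u‖ * e₁ i) := by
    intro i
    have hweq : w = d + l • u := by rw [hd]; abel
    rw [hweq, map_add, map_smul, hR]
    simp [smul_smul]
    ring
  have he0 : e₁ 0 = (1 : ℝ) := rfl
  have he1 : e₁ 1 = (0 : ℝ) := rfl
  have hRd1 : |(R d) 1| ≤ 2 * ε * (t - s) := by
    calc |(R d) 1| ≤ ‖R d‖ := abs_coord_le _ _
      _ = ‖d‖ := R.norm_map d
      _ ≤ 2 * ε * (t - s) := hd_norm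
  have hRd0 : -(2 * ε * (t - s)) ≤ (R d) 0 := by
    have := abs_coord_le (R d) 0
    have h' : ‖R d‖ = ‖d‖ := R.norm_map d
    have := (abs_le.1 this).1
    rw [h'] at this
    linarith
  have hx1 : |(R w) 1| ≤ 2 * ε * (t - s) := by
    rw [hRw 1, he1]; simpa using hRd1
  have hx0 : (1 - 3 * ε) * (t - s) ≤ (R w) 0 := by
    rw [hRw 0, he0]
    have hl_u : (1 - ε) * (t - s) ≤ l * ‖u‖ := by
      calc (1 - ε) * (t - s) = l * ((1 - ε) * (T - s)) := by
            rw [show l * ((1-ε)*(T-s)) = (1-ε)*(l*(T-s)) by ring, hlTs]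
        _ ≤ l * ‖u‖ := mul_le_mul_of_nonneg_left hu_lb hlpos.le
    nlinarith
  -- now the goal
  have hgoal1 : (WithLp.equiv 2 (Fin 2 → ℝ)) (‖u‖⁻¹ • R w) 1 = ‖u‖⁻¹ * (R w) 1 := rfl
  have hgoal0 : (WithLp.equiv 2 (Fin 2 → ℝ)) (‖u‖⁻¹ • R w) 0 = ‖u‖⁻¹ * (R w) 0 := rfl
  rw [hgoal1, hgoal0, abs_mul, abs_of_pos (inv_pos.2 hu_pos)]
  have h3ε : (0:ℝ) < 1 - 3 * ε := by linarith
  set c := 2 * ε / (1 - 3 * ε) with hc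
  have hcε : c * (1 - 3 * ε) = 2 * ε := div_mul_cancel₀ _ h3ε.ne'
  have hc_nonneg : 0 ≤ c := div_nonneg (by linarith) h3ε.le
  have key : |(R w) 1| ≤ c * (R w) 0 := by
    have h1' : 2 * ε * (t - s) ≤ c * (R w) 0 := by
      have := mul_le_mul_of_nonneg_left hx0 hc_nonneg
      calc 2 * ε * (t - s) = c * ((1 - 3 * ε) * (t - s)) := by
            rw [show c * ((1-3*ε)*(t-s)) = (c*(1-3*ε))*(t-s) by ring, hcε]
        _ ≤ c * (R w) 0 := this
    linarith
  calc ‖u‖⁻¹ * |(R w) 1| ≤ ‖u‖⁻¹ * (c * (R w) 0) :=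
        mul_le_mul_of_nonneg_left key (inv_pos.2 hu_pos).le
    _ = c * (‖u‖⁻¹ * (R w) 0) := by ring


end
end

section
/- Suppose γ = (x,y) : [0,1] → ℝ² is a continuous BV path with x₀ = y₀ = 0, x₁ = 1, and suppose that for every nonzero integer k and every b ∈ ℂ the identity (1 − cosh b)·∫∫_{0<s<t<1}(e^{2kπi x_s + b(x_t − x_s)} − e^{2kπi x_t + b(x_s − x_t)}) dy_s dy_t + (sinh b)·(∫₀¹ e^{b x_s} dy_s)(∫₀¹ e^{(2kπi − b)x_s} dy_s) = 0 holds, and also ∫₀¹ e^{2kπi x_t} dy_t = 0 for all k ∈ ℤ∖{0}. Then for all p, q ∈ ℤ∖{0} with p + q ≠ 0: ∫∫_{0<s<t<1}(e^{2πi(p x_s + q x_t)} − e^{2πi(p x_t + q x_s)}) dy_s dy_t = 0. -/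
open MeasureTheory Set Complex

/-- Norm of a complex exponential. -/
lemma aux_norm_exp (z : ℂ) : ‖Complex.exp z‖ = Real.exp z.re := by
  rw [Complex.norm_exp]

/-- Perturbation bound for complex exponentials with purely imaginary base point. -/
lemma aux_exp_perturb (c w : ℂ) (hc : c.re = 0) (h : ‖w‖ ≤ 1) :
    ‖Complex.exp (c + w) - Complex.exp c‖ ≤ 2 * ‖w‖ := by
  rw [Complex.exp_add]
  have h1 : Complex.exp c * Complex.exp w - Complex.exp c
      = Complex.exp c * (Complex.exp w - 1) := by ring
  rw [h1, norm_mul, aux_norm_exp, hc, Real.exp_zero, one_mul]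
  have := Complex.norm_exp_sub_one_le (x := w) h
  simpa using this

/-- `cosh ε - 1 ≥ ε²/2` for `ε ≥ 0`. -/
lemma aux_cosh_lower {ε : ℝ} (hε : 0 ≤ ε) : 1 + ε ^ 2 / 2 ≤ Real.cosh ε := by
  have h1 : Real.cosh ε = Real.cosh (ε / 2) ^ 2 + Real.sinh (ε / 2) ^ 2 := by
    have := Real.cosh_two_mul (ε / 2)
    rw [show 2 * (ε / 2) = ε by ring] at this
    exact this
  have h2 : ε / 2 ≤ Real.sinh (ε / 2) := by
    rcases eq_or_lt_of_le hε with h | h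
    · simp [← h]
    · exact (Real.self_lt_sinh_iff.mpr (by linarith)).le
  have h3 : Real.cosh (ε / 2) ^ 2 = 1 + Real.sinh (ε / 2) ^ 2 := Real.cosh_sq' (ε / 2)
  nlinarith [h2, hε]

/-- `sinh ε ≤ 2ε` for `0 ≤ ε ≤ 1/2`. -/
lemma aux_sinh_upper {ε : ℝ} (h0 : 0 ≤ ε) (h1 : ε ≤ 1 / 2) : Real.sinh ε ≤ 2 * ε := by
  rw [Real.sinh_eq]
  have habs : |(2 : ℝ) * ε| ≤ 1 := by
    rw [_root_.abs_of_nonneg (by linarith : (0:ℝ) ≤ 2 * ε)]; linarith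
  have h2 := Real.abs_exp_sub_one_le habs
  have h4 : (1 : ℝ) ≤ Real.exp (2 * ε) := Real.one_le_exp (by linarith)
  have h3 : Real.exp (2 * ε) - 1 ≤ 4 * ε := by
    rw [_root_.abs_of_nonneg (by linarith : (0:ℝ) ≤ Real.exp (2 * ε) - 1),
      _root_.abs_of_nonneg (by linarith : (0:ℝ) ≤ 2 * ε)] at h2
    linarith
  have h5 : Real.exp ε - Real.exp (-ε) = Real.exp (-ε) * (Real.exp (2 * ε) - 1) := by
    rw [mul_sub, ← Real.exp_add]; ring_nf
  have h6 : Real.exp (-ε) ≤ 1 := by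
    rw [show (1 : ℝ) = Real.exp 0 by simp]
    exact Real.exp_le_exp.mpr (by linarith)
  have h8 : Real.exp (-ε) * (Real.exp (2 * ε) - 1) ≤ 4 * ε := by
    calc Real.exp (-ε) * (Real.exp (2 * ε) - 1) ≤ 1 * (Real.exp (2 * ε) - 1) :=
          mul_le_mul_of_nonneg_right h6 (by linarith)
      _ ≤ 4 * ε := by linarith
  linarith [h5, h8]

set_option maxHeartbeats 1000000 in
theorem second_order_integral_identity
    (x y : ℝ → ℝ)
    (hx : ContinuousOn x (Icc 0 1)) (hy : ContinuousOn y (Icc 0 1))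
    (hx0 : x 0 = 0) (hy0 : y 0 = 0) (hx1 : x 1 = 1)
    (ν : Measure ℝ) [IsFiniteMeasure ν] (gy : ℝ → ℝ)
    (hgy : Integrable gy (ν.restrict (Icc 0 1)))
    (hlink : ∀ a b : ℝ, 0 ≤ a → a ≤ b → b ≤ 1 →
      ∫ t in Icc a b, gy t ∂ν = y b - y a)
    (h2 : ∀ (k : ℤ), k ≠ 0 → ∀ b : ℂ,
      (1 - Complex.cosh b) *
        (∫ r in {q : ℝ × ℝ | 0 < q.1 ∧ q.1 < q.2 ∧ q.2 < 1},
            (Complex.exp (2 * k * Real.pi * Complex.I * (x r.1)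
                  + b * ((x r.2 : ℂ) - (x r.1 : ℂ)))
              - Complex.exp (2 * k * Real.pi * Complex.I * (x r.2)
                  + b * ((x r.1 : ℂ) - (x r.2 : ℂ))))
              * (gy r.1 : ℂ) * (gy r.2 : ℂ) ∂(ν.prod ν))
      + Complex.sinh b *
          (∫ t in Icc (0 : ℝ) 1, Complex.exp (b * (x t : ℂ)) * (gy t : ℂ) ∂ν) *
          (∫ t in Icc (0 : ℝ) 1,
            Complex.exp ((2 * k * Real.pi * Complex.I - b) * (x t : ℂ)) * (gy t : ℂ) ∂ν)
      = 0)
    (h1 : ∀ (k : ℤ), k ≠ 0 →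
      ∫ t in Icc (0 : ℝ) 1,
        Complex.exp (2 * k * Real.pi * Complex.I * (x t)) * (gy t : ℂ) ∂ν = 0) :
    ∀ (p q : ℤ), p ≠ 0 → q ≠ 0 → p + q ≠ 0 →
      ∫ r in {q : ℝ × ℝ | 0 < q.1 ∧ q.1 < q.2 ∧ q.2 < 1},
          (Complex.exp (2 * Real.pi * Complex.I * (p * (x r.1) + q * (x r.2)))
            - Complex.exp (2 * Real.pi * Complex.I * (p * (x r.2) + q * (x r.1))))
            * (gy r.1 : ℂ) * (gy r.2 : ℂ) ∂(ν.prod ν) = 0 := by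
  intro p q hp hq hpq
  set T : Set (ℝ × ℝ) := {r : ℝ × ℝ | 0 < r.1 ∧ r.1 < r.2 ∧ r.2 < 1} with hTdef
  have hTopen : IsOpen T :=
    (isOpen_lt continuous_const continuous_fst).inter
      ((isOpen_lt continuous_fst continuous_snd).inter
        (isOpen_lt continuous_snd continuous_const))
  have hTm : MeasurableSet T := hTopen.measurableSet
  have hTsub : T ⊆ Icc (0:ℝ) 1 ×ˢ Icc (0:ℝ) 1 := by
    rintro ⟨s, t⟩ ⟨h1', h2', h3'⟩
    exact ⟨⟨h1'.le, (h2'.trans h3').le⟩, ⟨(h1'.trans h2').le, h3'.le⟩⟩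
  obtain ⟨M, hM⟩ := (isCompact_Icc (a := (0:ℝ)) (b := 1)).exists_bound_of_continuousOn hx
  have hM' : ∀ t ∈ Icc (0:ℝ) 1, |x t| ≤ M := by
    intro t ht; simpa [Real.norm_eq_abs] using hM t ht
  have hM0 : 0 ≤ M := le_trans (abs_nonneg _) (hM' 0 ⟨le_refl 0, zero_le_one⟩)
  -- basic data
  set b0 : ℂ := (q : ℂ) * (2 * (Real.pi : ℂ) * Complex.I) with hb0def
  have hb0re : b0.re = 0 := by simp [hb0def]
  -- cosh/sinh at b0
  have hb01 : Complex.exp b0 = 1 := Complex.exp_int_mul_two_pi_mul_I q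
  have hb02 : Complex.exp (-b0) = 1 := by
    rw [show -b0 = ((-q : ℤ) : ℂ) * (2 * (Real.pi : ℂ) * Complex.I) by
      rw [hb0def]; push_cast; ring]
    exact Complex.exp_int_mul_two_pi_mul_I (-q)
  have hcosh0 : Complex.cosh b0 = 1 := by
    have e1 := Complex.cosh_add_sinh b0
    have e2 := Complex.cosh_sub_sinh b0
    rw [hb01] at e1; rw [hb02] at e2
    linear_combination (e1 + e2) / 2
  have hsinh0 : Complex.sinh b0 = 0 := by
    have e1 := Complex.cosh_add_sinh b0
    have e2 := Complex.cosh_sub_sinh b0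
    rw [hb01] at e1; rw [hb02] at e2
    linear_combination (e1 - e2) / 2
  -- measurability and integrability of the single integrals
  have hgyae : AEStronglyMeasurable (fun t => (gy t : ℂ)) (ν.restrict (Icc (0:ℝ) 1)) :=
    Complex.continuous_ofReal.comp_aestronglyMeasurable hgy.1
  have hIntA : ∀ c : ℂ,
      Integrable (fun t => Complex.exp (c * (x t : ℂ)) * (gy t : ℂ)) (ν.restrict (Icc (0:ℝ) 1)) := by
    intro c
    have hsm : AEStronglyMeasurable (fun t => Complex.exp (c * (x t : ℂ)))
        (ν.restrict (Icc (0:ℝ) 1)) :=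
      (Complex.continuous_exp.comp_continuousOn
        (continuousOn_const.mul (Complex.continuous_ofReal.comp_continuousOn hx))).aestronglyMeasurable
        measurableSet_Icc
    refine (hgy.norm.const_mul (Real.exp (‖c‖ * M))).mono' (hsm.mul hgyae) ?_
    filter_upwards [ae_restrict_mem measurableSet_Icc] with t ht
    rw [norm_mul, aux_norm_exp]
    have hre : (c * (x t : ℂ)).re = c.re * x t := by simp [Complex.mul_re]
    have h1' : (c * (x t : ℂ)).re ≤ ‖c‖ * M := by
      rw [hre]
      calc c.re * x t ≤ |c.re * x t| := le_abs_self _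
        _ = |c.re| * |x t| := abs_mul _ _
        _ ≤ ‖c‖ * M := by
            refine mul_le_mul ?_ (hM' t ht) (abs_nonneg _) (norm_nonneg c)
            exact Complex.abs_re_le_norm c
    rw [Complex.norm_real]
    exact mul_le_mul_of_nonneg_right (Real.exp_le_exp.mpr h1') (norm_nonneg _)
  -- product integrability
  have hgyprod : Integrable (fun r : ℝ × ℝ => ‖gy r.1‖ * ‖gy r.2‖)
      ((ν.prod ν).restrict T) := by
    have h := hgy.norm.mul_prod hgy.norm
    rw [Measure.prod_restrict] at h
    exact h.mono_measure (Measure.restrict_mono hTsub le_rfl)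
  have hgyprodC : AEStronglyMeasurable (fun r : ℝ × ℝ => (gy r.1 : ℂ) * (gy r.2 : ℂ))
      ((ν.prod ν).restrict T) := by
    have h := hgy.mul_prod hgy
    rw [Measure.prod_restrict] at h
    have h' := (h.mono_measure (Measure.restrict_mono hTsub le_rfl)).1
    have hc := Complex.continuous_ofReal.comp_aestronglyMeasurable h'
    refine hc.congr (Filter.Eventually.of_forall fun r => ?_)
    push_cast; ring
  have hx1T : ContinuousOn (fun r : ℝ × ℝ => ((x r.1 : ℝ) : ℂ)) T :=
    Complex.continuous_ofReal.comp_continuousOn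
      (hx.comp continuous_fst.continuousOn (fun r hr => (hTsub hr).1))
  have hx2T : ContinuousOn (fun r : ℝ × ℝ => ((x r.2 : ℝ) : ℂ)) T :=
    Complex.continuous_ofReal.comp_continuousOn
      (hx.comp continuous_snd.continuousOn (fun r hr => (hTsub hr).2))
  have hIntPhi : ∀ c : ℂ,
      Integrable (fun r : ℝ × ℝ =>
        (Complex.exp (2 * ((p + q : ℤ) : ℂ) * (Real.pi : ℂ) * Complex.I * (x r.1)
              + c * ((x r.2 : ℂ) - (x r.1 : ℂ)))
          - Complex.exp (2 * ((p + q : ℤ) : ℂ) * (Real.pi : ℂ) * Complex.I * (x r.2)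
              + c * ((x r.1 : ℂ) - (x r.2 : ℂ))))
          * (gy r.1 : ℂ) * (gy r.2 : ℂ)) ((ν.prod ν).restrict T) := by
    intro c
    have hsm : AEStronglyMeasurable (fun r : ℝ × ℝ =>
        Complex.exp (2 * ((p + q : ℤ) : ℂ) * (Real.pi : ℂ) * Complex.I * (x r.1)
              + c * ((x r.2 : ℂ) - (x r.1 : ℂ)))
          - Complex.exp (2 * ((p + q : ℤ) : ℂ) * (Real.pi : ℂ) * Complex.I * (x r.2)
              + c * ((x r.1 : ℂ) - (x r.2 : ℂ)))) ((ν.prod ν).restrict T) := by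
      refine ContinuousOn.aestronglyMeasurable ?_ hTm
      exact (Complex.continuous_exp.comp_continuousOn
          ((continuousOn_const.mul hx1T).add (continuousOn_const.mul (hx2T.sub hx1T)))).sub
        (Complex.continuous_exp.comp_continuousOn
          ((continuousOn_const.mul hx2T).add (continuousOn_const.mul (hx1T.sub hx2T))))
    have hsm2 : AEStronglyMeasurable (fun r : ℝ × ℝ =>
        (Complex.exp (2 * ((p + q : ℤ) : ℂ) * (Real.pi : ℂ) * Complex.I * (x r.1)
              + c * ((x r.2 : ℂ) - (x r.1 : ℂ)))
          - Complex.exp (2 * ((p + q : ℤ) : ℂ) * (Real.pi : ℂ) * Complex.I * (x r.2)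
              + c * ((x r.1 : ℂ) - (x r.2 : ℂ))))
          * (gy r.1 : ℂ) * (gy r.2 : ℂ)) ((ν.prod ν).restrict T) := by
      refine (hsm.mul hgyprodC).congr (Filter.Eventually.of_forall fun r => ?_)
      simp only [Pi.mul_apply]
      ring
    refine (hgyprod.const_mul (2 * Real.exp (‖c‖ * (2 * M)))).mono' hsm2 ?_
    filter_upwards [ae_restrict_mem hTm] with r hr
    have hr1 : |x r.1| ≤ M := hM' _ (hTsub hr).1
    have hr2 : |x r.2| ≤ M := hM' _ (hTsub hr).2
    have hbd : ∀ u v : ℝ, |u| ≤ M → |v| ≤ M →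
        ‖Complex.exp (2 * ((p + q : ℤ) : ℂ) * (Real.pi : ℂ) * Complex.I * (u : ℝ)
          + c * ((v : ℂ) - (u : ℂ)))‖ ≤ Real.exp (‖c‖ * (2 * M)) := by
      intro u v hu hv
      rw [aux_norm_exp]
      apply Real.exp_le_exp.mpr
      have hre : (2 * ((p + q : ℤ) : ℂ) * (Real.pi : ℂ) * Complex.I * (u : ℝ)
          + c * ((v : ℂ) - (u : ℂ))).re = c.re * (v - u) := by
        simp [Complex.add_re, Complex.mul_re, Complex.mul_im, Complex.sub_re, Complex.sub_im]
      rw [hre]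
      calc c.re * (v - u) ≤ |c.re * (v - u)| := le_abs_self _
        _ = |c.re| * |v - u| := abs_mul _ _
        _ ≤ ‖c‖ * (2 * M) := by
            refine mul_le_mul ?_ ?_ (abs_nonneg _) (norm_nonneg c)
            · exact Complex.abs_re_le_norm c
            · calc |v - u| ≤ |v| + |u| := abs_sub _ _
                _ ≤ 2 * M := by linarith
    rw [norm_mul, norm_mul, Complex.norm_real, Complex.norm_real]
    have hb1 := hbd (x r.1) (x r.2) hr1 hr2
    have hb2 := hbd (x r.2) (x r.1) hr2 hr1
    have hnd : ‖Complex.exp (2 * ((p + q : ℤ) : ℂ) * (Real.pi : ℂ) * Complex.I * (x r.1)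
              + c * ((x r.2 : ℂ) - (x r.1 : ℂ)))
          - Complex.exp (2 * ((p + q : ℤ) : ℂ) * (Real.pi : ℂ) * Complex.I * (x r.2)
              + c * ((x r.1 : ℂ) - (x r.2 : ℂ)))‖ ≤ 2 * Real.exp (‖c‖ * (2 * M)) := by
      refine (norm_sub_le _ _).trans ?_
      linarith
    have hg1 : (0:ℝ) ≤ ‖gy r.1‖ := norm_nonneg _
    have hg2 : (0:ℝ) ≤ ‖gy r.2‖ := norm_nonneg _
    calc ‖Complex.exp (2 * ((p + q : ℤ) : ℂ) * (Real.pi : ℂ) * Complex.I * (x r.1)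
              + c * ((x r.2 : ℂ) - (x r.1 : ℂ)))
          - Complex.exp (2 * ((p + q : ℤ) : ℂ) * (Real.pi : ℂ) * Complex.I * (x r.2)
              + c * ((x r.1 : ℂ) - (x r.2 : ℂ)))‖ * ‖gy r.1‖ * ‖gy r.2‖
        ≤ (2 * Real.exp (‖c‖ * (2 * M))) * ‖gy r.1‖ * ‖gy r.2‖ :=
          mul_le_mul_of_nonneg_right (mul_le_mul_of_nonneg_right hnd hg1) hg2
      _ = 2 * Real.exp (‖c‖ * (2 * M)) * (‖gy r.1‖ * ‖gy r.2‖) := by ring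
  -- key vanishing of the single integrals at b0
  have hA0 : (∫ t in Icc (0:ℝ) 1, Complex.exp (b0 * (x t : ℂ)) * (gy t : ℂ) ∂ν) = 0 := by
    rw [← h1 q hq]
    refine integral_congr_ae (Filter.Eventually.of_forall fun t => ?_)
    show Complex.exp (b0 * (x t : ℂ)) * (gy t : ℂ)
      = Complex.exp (2 * (q : ℂ) * (Real.pi : ℂ) * Complex.I * (x t : ℂ)) * (gy t : ℂ)
    rw [show b0 * (x t : ℂ) = 2 * (q : ℂ) * (Real.pi : ℂ) * Complex.I * (x t : ℂ) by
      rw [hb0def]; ring]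
  have hB0 : (∫ t in Icc (0:ℝ) 1,
      Complex.exp ((2 * ((p + q : ℤ) : ℂ) * (Real.pi : ℂ) * Complex.I - b0) * (x t : ℂ))
        * (gy t : ℂ) ∂ν) = 0 := by
    rw [← h1 p hp]
    refine integral_congr_ae (Filter.Eventually.of_forall fun t => ?_)
    show Complex.exp ((2 * ((p + q : ℤ) : ℂ) * (Real.pi : ℂ) * Complex.I - b0) * (x t : ℂ))
        * (gy t : ℂ)
      = Complex.exp (2 * (p : ℂ) * (Real.pi : ℂ) * Complex.I * (x t : ℂ)) * (gy t : ℂ)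
    rw [show (2 * ((p + q : ℤ) : ℂ) * (Real.pi : ℂ) * Complex.I - b0) * (x t : ℂ)
        = 2 * (p : ℂ) * (Real.pi : ℂ) * Complex.I * (x t : ℂ) by
      rw [hb0def]; push_cast; ring]
  -- abbreviations
  set Iy : ℝ := ∫ t in Icc (0:ℝ) 1, ‖gy t‖ ∂ν with hIydef
  have hIy0 : 0 ≤ Iy := by rw [hIydef]; exact integral_nonneg fun t => norm_nonneg _
  set J : ℝ := ∫ r in T, ‖gy r.1‖ * ‖gy r.2‖ ∂(ν.prod ν) with hJdef
  have hJ0 : 0 ≤ J := by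
    rw [hJdef]; exact integral_nonneg fun r => mul_nonneg (norm_nonneg _) (norm_nonneg _)
  set Φ0 : ℂ := ∫ r in T,
      (Complex.exp (2 * ((p + q : ℤ) : ℂ) * (Real.pi : ℂ) * Complex.I * (x r.1)
          + b0 * ((x r.2 : ℂ) - (x r.1 : ℂ)))
        - Complex.exp (2 * ((p + q : ℤ) : ℂ) * (Real.pi : ℂ) * Complex.I * (x r.2)
          + b0 * ((x r.1 : ℂ) - (x r.2 : ℂ))))
        * (gy r.1 : ℂ) * (gy r.2 : ℂ) ∂(ν.prod ν) with hPhi0def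
  set C : ℝ := 8 * M * J + 16 * M ^ 2 * Iy ^ 2 with hCdef
  have hC0 : 0 ≤ C := by rw [hCdef]; positivity
  -- the main estimate
  have main : ∀ ε : ℝ, 0 < ε → ε ≤ 1 / (2 * M + 2) → ‖Φ0‖ ≤ C * ε := by
    intro ε hε hεE
    have hden : (0:ℝ) < 2 * M + 2 := by linarith
    have hεle : ε * (2 * M + 2) ≤ 1 := by
      rw [le_div_iff₀ hden] at hεE; exact hεE
    have hε2M : ε * (2 * M) ≤ 1 := by nlinarith
    have hεM : ε * M ≤ 1 := by nlinarith
    have hεhalf : ε ≤ 1 / 2 := by nlinarith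
    -- cosh and sinh at b0 + ε
    have hcoshb : Complex.cosh (b0 + (ε : ℂ)) = ((Real.cosh ε : ℝ) : ℂ) := by
      rw [Complex.cosh_add, hcosh0, hsinh0, Complex.ofReal_cosh]; ring
    have hsinhb : Complex.sinh (b0 + (ε : ℂ)) = ((Real.sinh ε : ℝ) : ℂ) := by
      rw [Complex.sinh_add, hsinh0, hcosh0, Complex.ofReal_sinh]; ring
    set Φε : ℂ := ∫ r in T,
        (Complex.exp (2 * ((p + q : ℤ) : ℂ) * (Real.pi : ℂ) * Complex.I * (x r.1)
            + (b0 + (ε : ℂ)) * ((x r.2 : ℂ) - (x r.1 : ℂ)))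
          - Complex.exp (2 * ((p + q : ℤ) : ℂ) * (Real.pi : ℂ) * Complex.I * (x r.2)
            + (b0 + (ε : ℂ)) * ((x r.1 : ℂ) - (x r.2 : ℂ))))
          * (gy r.1 : ℂ) * (gy r.2 : ℂ) ∂(ν.prod ν) with hPhiεdef
    set Aε : ℂ := ∫ t in Icc (0:ℝ) 1,
        Complex.exp ((b0 + (ε : ℂ)) * (x t : ℂ)) * (gy t : ℂ) ∂ν with hAεdef
    set Bε : ℂ := ∫ t in Icc (0:ℝ) 1,
        Complex.exp ((2 * ((p + q : ℤ) : ℂ) * (Real.pi : ℂ) * Complex.I - (b0 + (ε : ℂ)))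
          * (x t : ℂ)) * (gy t : ℂ) ∂ν with hBεdef
    have key := h2 (p + q) hpq (b0 + (ε : ℂ))
    rw [hcoshb, hsinhb, ← hPhiεdef, ← hAεdef, ← hBεdef] at key
    have keq : (((Real.cosh ε : ℝ) : ℂ) - 1) * Φε = ((Real.sinh ε : ℝ) : ℂ) * (Aε * Bε) := by
      linear_combination -key
    -- bound on Aε
    have hAb : ‖Aε‖ ≤ 2 * ε * M * Iy := by
      have hAeq : (∫ t in Icc (0:ℝ) 1,
          (Complex.exp ((b0 + (ε : ℂ)) * (x t : ℂ)) - Complex.exp (b0 * (x t : ℂ)))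
            * (gy t : ℂ) ∂ν) = Aε := by
        have hfe : (fun t => (Complex.exp ((b0 + (ε : ℂ)) * (x t : ℂ))
              - Complex.exp (b0 * (x t : ℂ))) * (gy t : ℂ))
            = fun t => Complex.exp ((b0 + (ε : ℂ)) * (x t : ℂ)) * (gy t : ℂ)
              - Complex.exp (b0 * (x t : ℂ)) * (gy t : ℂ) := funext fun t => by ring
        rw [hfe, integral_sub (hIntA _) (hIntA _), hA0, sub_zero, hAεdef]
      rw [← hAeq]
      refine le_trans (norm_integral_le_of_norm_le (hgy.norm.const_mul (2 * ε * M)) ?_) ?_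
      · filter_upwards [ae_restrict_mem measurableSet_Icc] with t ht
        rw [norm_mul, Complex.norm_real]
        have hsplit : (b0 + (ε : ℂ)) * (x t : ℂ)
            = b0 * (x t : ℂ) + ((ε : ℝ) : ℂ) * ((x t : ℝ) : ℂ) := by push_cast; ring
        have hcre : (b0 * (x t : ℂ)).re = 0 := by
          rw [Complex.mul_re, hb0re, Complex.ofReal_im]; ring
        have hw : ‖((ε : ℝ) : ℂ) * ((x t : ℝ) : ℂ)‖ = ε * |x t| := by
          rw [norm_mul, Complex.norm_real, Complex.norm_real, Real.norm_eq_abs,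
            Real.norm_eq_abs, _root_.abs_of_nonneg hε.le]
        have hw1 : ‖((ε : ℝ) : ℂ) * ((x t : ℝ) : ℂ)‖ ≤ 1 := by
          rw [hw]
          calc ε * |x t| ≤ ε * M := mul_le_mul_of_nonneg_left (hM' t ht) hε.le
            _ ≤ 1 := hεM
        have hper := aux_exp_perturb (b0 * (x t : ℂ)) (((ε : ℝ) : ℂ) * ((x t : ℝ) : ℂ))
          hcre hw1
        rw [hsplit]
        refine mul_le_mul_of_nonneg_right (hper.trans ?_) (norm_nonneg _)
        rw [hw]
        calc 2 * (ε * |x t|) ≤ 2 * (ε * M) := by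
              have := mul_le_mul_of_nonneg_left (hM' t ht) hε.le; linarith
          _ = 2 * ε * M := by ring
      · rw [integral_const_mul, ← hIydef]
    -- bound on Bε
    have hBb : ‖Bε‖ ≤ 2 * ε * M * Iy := by
      have hBeq : (∫ t in Icc (0:ℝ) 1,
          (Complex.exp ((2 * ((p + q : ℤ) : ℂ) * (Real.pi : ℂ) * Complex.I - (b0 + (ε : ℂ)))
              * (x t : ℂ))
            - Complex.exp ((2 * ((p + q : ℤ) : ℂ) * (Real.pi : ℂ) * Complex.I - b0)
              * (x t : ℂ))) * (gy t : ℂ) ∂ν) = Bε := by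
        have hfe : (fun t => (Complex.exp ((2 * ((p + q : ℤ) : ℂ) * (Real.pi : ℂ) * Complex.I
                - (b0 + (ε : ℂ))) * (x t : ℂ))
              - Complex.exp ((2 * ((p + q : ℤ) : ℂ) * (Real.pi : ℂ) * Complex.I - b0)
                * (x t : ℂ))) * (gy t : ℂ))
            = fun t => Complex.exp ((2 * ((p + q : ℤ) : ℂ) * (Real.pi : ℂ) * Complex.I
                - (b0 + (ε : ℂ))) * (x t : ℂ)) * (gy t : ℂ)
              - Complex.exp ((2 * ((p + q : ℤ) : ℂ) * (Real.pi : ℂ) * Complex.I - b0)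
                * (x t : ℂ)) * (gy t : ℂ) := funext fun t => by ring
        rw [hfe, integral_sub (hIntA _) (hIntA _), hB0, sub_zero, hBεdef]
      rw [← hBeq]
      refine le_trans (norm_integral_le_of_norm_le (hgy.norm.const_mul (2 * ε * M)) ?_) ?_
      · filter_upwards [ae_restrict_mem measurableSet_Icc] with t ht
        rw [norm_mul, Complex.norm_real]
        have hsplit : (2 * ((p + q : ℤ) : ℂ) * (Real.pi : ℂ) * Complex.I - (b0 + (ε : ℂ)))
              * (x t : ℂ)
            = (2 * ((p + q : ℤ) : ℂ) * (Real.pi : ℂ) * Complex.I - b0) * (x t : ℂ)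
              + ((-ε : ℝ) : ℂ) * ((x t : ℝ) : ℂ) := by push_cast; ring
        have hcre : ((2 * ((p + q : ℤ) : ℂ) * (Real.pi : ℂ) * Complex.I - b0)
            * (x t : ℂ)).re = 0 := by
          have h0 : (2 * ((p + q : ℤ) : ℂ) * (Real.pi : ℂ) * Complex.I - b0).re = 0 := by
            simp [Complex.sub_re, hb0re]
          rw [Complex.mul_re, h0, Complex.ofReal_im]; ring
        have hw : ‖((-ε : ℝ) : ℂ) * ((x t : ℝ) : ℂ)‖ = ε * |x t| := by
          rw [norm_mul, Complex.norm_real, Complex.norm_real, Real.norm_eq_abs,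
            Real.norm_eq_abs, abs_neg, _root_.abs_of_nonneg hε.le]
        have hw1 : ‖((-ε : ℝ) : ℂ) * ((x t : ℝ) : ℂ)‖ ≤ 1 := by
          rw [hw]
          calc ε * |x t| ≤ ε * M := mul_le_mul_of_nonneg_left (hM' t ht) hε.le
            _ ≤ 1 := hεM
        have hper := aux_exp_perturb
          ((2 * ((p + q : ℤ) : ℂ) * (Real.pi : ℂ) * Complex.I - b0) * (x t : ℂ))
          (((-ε : ℝ) : ℂ) * ((x t : ℝ) : ℂ)) hcre hw1
        rw [hsplit]
        refine mul_le_mul_of_nonneg_right (hper.trans ?_) (norm_nonneg _)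
        rw [hw]
        calc 2 * (ε * |x t|) ≤ 2 * (ε * M) := by
              have := mul_le_mul_of_nonneg_left (hM' t ht) hε.le; linarith
          _ = 2 * ε * M := by ring
      · rw [integral_const_mul, ← hIydef]
    -- Lipschitz bound for the double integral
    have hone : ∀ u v : ℝ, |u| ≤ M → |v| ≤ M →
        ‖Complex.exp (2 * ((p + q : ℤ) : ℂ) * (Real.pi : ℂ) * Complex.I * (u : ℝ)
            + (b0 + (ε : ℂ)) * ((v : ℂ) - (u : ℂ)))
          - Complex.exp (2 * ((p + q : ℤ) : ℂ) * (Real.pi : ℂ) * Complex.I * (u : ℝ)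
            + b0 * ((v : ℂ) - (u : ℂ)))‖ ≤ 4 * ε * M := by
      intro u v hu hv
      have hsplit : 2 * ((p + q : ℤ) : ℂ) * (Real.pi : ℂ) * Complex.I * (u : ℝ)
            + (b0 + (ε : ℂ)) * ((v : ℂ) - (u : ℂ))
          = (2 * ((p + q : ℤ) : ℂ) * (Real.pi : ℂ) * Complex.I * (u : ℝ)
            + b0 * ((v : ℂ) - (u : ℂ))) + ((ε : ℝ) : ℂ) * ((v - u : ℝ) : ℂ) := by
        push_cast; ring
      have hcre : (2 * ((p + q : ℤ) : ℂ) * (Real.pi : ℂ) * Complex.I * (u : ℝ)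
          + b0 * ((v : ℂ) - (u : ℂ))).re = 0 := by
        simp [hb0def, Complex.add_re, Complex.mul_re, Complex.mul_im, Complex.sub_re,
          Complex.sub_im]
      have hvu : |v - u| ≤ 2 * M := by
        calc |v - u| ≤ |v| + |u| := abs_sub _ _
          _ ≤ 2 * M := by linarith
      have hw : ‖((ε : ℝ) : ℂ) * ((v - u : ℝ) : ℂ)‖ = ε * |v - u| := by
        rw [norm_mul, Complex.norm_real, Complex.norm_real, Real.norm_eq_abs,
          Real.norm_eq_abs, _root_.abs_of_nonneg hε.le]
      have hw1 : ‖((ε : ℝ) : ℂ) * ((v - u : ℝ) : ℂ)‖ ≤ 1 := by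
        rw [hw]
        calc ε * |v - u| ≤ ε * (2 * M) := mul_le_mul_of_nonneg_left hvu hε.le
          _ ≤ 1 := hε2M
      have hper := aux_exp_perturb
        (2 * ((p + q : ℤ) : ℂ) * (Real.pi : ℂ) * Complex.I * (u : ℝ)
          + b0 * ((v : ℂ) - (u : ℂ)))
        (((ε : ℝ) : ℂ) * ((v - u : ℝ) : ℂ)) hcre hw1
      rw [hsplit]
      refine hper.trans ?_
      rw [hw]
      calc 2 * (ε * |v - u|) ≤ 2 * (ε * (2 * M)) := by
            have := mul_le_mul_of_nonneg_left hvu hε.le; linarith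
        _ = 4 * ε * M := by ring
    have hdiffb : ‖Φ0 - Φε‖ ≤ 8 * ε * M * J := by
      rw [hPhi0def, hPhiεdef, ← integral_sub (hIntPhi b0) (hIntPhi (b0 + (ε : ℂ)))]
      refine le_trans (norm_integral_le_of_norm_le (hgyprod.const_mul (8 * ε * M)) ?_) ?_
      · filter_upwards [ae_restrict_mem hTm] with r hr
        have hr1 : |x r.1| ≤ M := hM' _ (hTsub hr).1
        have hr2 : |x r.2| ≤ M := hM' _ (hTsub hr).2
        have hrw : (Complex.exp (2 * ((p + q : ℤ) : ℂ) * (Real.pi : ℂ) * Complex.I * (x r.1)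
                + b0 * ((x r.2 : ℂ) - (x r.1 : ℂ)))
              - Complex.exp (2 * ((p + q : ℤ) : ℂ) * (Real.pi : ℂ) * Complex.I * (x r.2)
                + b0 * ((x r.1 : ℂ) - (x r.2 : ℂ))))
              * (gy r.1 : ℂ) * (gy r.2 : ℂ)
            - (Complex.exp (2 * ((p + q : ℤ) : ℂ) * (Real.pi : ℂ) * Complex.I * (x r.1)
                + (b0 + (ε : ℂ)) * ((x r.2 : ℂ) - (x r.1 : ℂ)))
              - Complex.exp (2 * ((p + q : ℤ) : ℂ) * (Real.pi : ℂ) * Complex.I * (x r.2)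
                + (b0 + (ε : ℂ)) * ((x r.1 : ℂ) - (x r.2 : ℂ))))
              * (gy r.1 : ℂ) * (gy r.2 : ℂ)
            = ((Complex.exp (2 * ((p + q : ℤ) : ℂ) * (Real.pi : ℂ) * Complex.I * (x r.1)
                + (b0 + (ε : ℂ)) * ((x r.2 : ℂ) - (x r.1 : ℂ)))
              - Complex.exp (2 * ((p + q : ℤ) : ℂ) * (Real.pi : ℂ) * Complex.I * (x r.1)
                + b0 * ((x r.2 : ℂ) - (x r.1 : ℂ))))
              - (Complex.exp (2 * ((p + q : ℤ) : ℂ) * (Real.pi : ℂ) * Complex.I * (x r.2)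
                + (b0 + (ε : ℂ)) * ((x r.1 : ℂ) - (x r.2 : ℂ)))
              - Complex.exp (2 * ((p + q : ℤ) : ℂ) * (Real.pi : ℂ) * Complex.I * (x r.2)
                + b0 * ((x r.1 : ℂ) - (x r.2 : ℂ)))))
              * (-((gy r.1 : ℂ) * (gy r.2 : ℂ))) := by ring
        show ‖_ - _‖ ≤ _
        rw [hrw, norm_mul, norm_neg, norm_mul, Complex.norm_real, Complex.norm_real]
        have h1d := hone (x r.1) (x r.2) hr1 hr2
        have h2d := hone (x r.2) (x r.1) hr2 hr1
        have hsum : ‖(Complex.exp (2 * ((p + q : ℤ) : ℂ) * (Real.pi : ℂ) * Complex.I * (x r.1)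
                + (b0 + (ε : ℂ)) * ((x r.2 : ℂ) - (x r.1 : ℂ)))
              - Complex.exp (2 * ((p + q : ℤ) : ℂ) * (Real.pi : ℂ) * Complex.I * (x r.1)
                + b0 * ((x r.2 : ℂ) - (x r.1 : ℂ))))
              - (Complex.exp (2 * ((p + q : ℤ) : ℂ) * (Real.pi : ℂ) * Complex.I * (x r.2)
                + (b0 + (ε : ℂ)) * ((x r.1 : ℂ) - (x r.2 : ℂ)))
              - Complex.exp (2 * ((p + q : ℤ) : ℂ) * (Real.pi : ℂ) * Complex.I * (x r.2)
                + b0 * ((x r.1 : ℂ) - (x r.2 : ℂ))))‖ ≤ 8 * ε * M := by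
          refine (norm_sub_le _ _).trans ?_
          linarith
        calc ‖_ - _‖ * (‖gy r.1‖ * ‖gy r.2‖) ≤ (8 * ε * M) * (‖gy r.1‖ * ‖gy r.2‖) :=
              mul_le_mul_of_nonneg_right hsum
                (mul_nonneg (norm_nonneg _) (norm_nonneg _))
          _ = 8 * ε * M * (‖gy r.1‖ * ‖gy r.2‖) := by ring
      · rw [integral_const_mul, ← hJdef]
    -- assemble
    have hcl := aux_cosh_lower hε.le
    have hsl := aux_sinh_upper hε.le hεhalf
    have hsinh_nn : 0 ≤ Real.sinh ε := Real.sinh_nonneg_iff.mpr hε.le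
    have hnormeq : (Real.cosh ε - 1) * ‖Φε‖ = Real.sinh ε * ‖Aε * Bε‖ := by
      have hn := congrArg norm keq
      rw [norm_mul, norm_mul,
        show ((Real.cosh ε : ℝ) : ℂ) - 1 = ((Real.cosh ε - 1 : ℝ) : ℂ) by push_cast; ring,
        Complex.norm_real, Complex.norm_real, Real.norm_eq_abs, Real.norm_eq_abs,
        _root_.abs_of_nonneg (by nlinarith [hcl, sq_nonneg ε] : (0:ℝ) ≤ Real.cosh ε - 1),
        _root_.abs_of_nonneg hsinh_nn] at hn
      exact hn
    have hprodb : ‖Aε * Bε‖ ≤ (2 * ε * M * Iy) * (2 * ε * M * Iy) := by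
      rw [norm_mul]
      exact mul_le_mul hAb hBb (norm_nonneg _) (by positivity)
    have hstep : (ε ^ 2 / 2) * ‖Φε‖ ≤ 2 * ε * ((2 * ε * M * Iy) * (2 * ε * M * Iy)) := by
      have l1 : (ε ^ 2 / 2) * ‖Φε‖ ≤ (Real.cosh ε - 1) * ‖Φε‖ :=
        mul_le_mul_of_nonneg_right (by linarith) (norm_nonneg _)
      have l2 : Real.sinh ε * ‖Aε * Bε‖ ≤ 2 * ε * ((2 * ε * M * Iy) * (2 * ε * M * Iy)) :=
        mul_le_mul hsl hprodb (norm_nonneg _) (by positivity)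
      linarith [hnormeq]
    have hPhiεb : ‖Φε‖ ≤ 16 * ε * M ^ 2 * Iy ^ 2 := by
      nlinarith [hstep, norm_nonneg Φε, mul_pos hε hε]
    calc ‖Φ0‖ = ‖(Φ0 - Φε) + Φε‖ := by rw [sub_add_cancel]
      _ ≤ ‖Φ0 - Φε‖ + ‖Φε‖ := norm_add_le _ _
      _ ≤ 8 * ε * M * J + 16 * ε * M ^ 2 * Iy ^ 2 := by linarith
      _ = C * ε := by rw [hCdef]; ring
  -- conclude Φ0 = 0
  have hPhi0 : Φ0 = 0 := by
    by_contra hne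
    have hpos : 0 < ‖Φ0‖ := norm_pos_iff.mpr hne
    have hden : (0:ℝ) < 2 * M + 2 := by linarith
    set ε : ℝ := min (1 / (2 * M + 2)) (‖Φ0‖ / (2 * (C + 1))) with hεdef
    have hεpos : 0 < ε := lt_min (by positivity) (by positivity)
    have hmain := main ε hεpos (min_le_left _ _)
    have hεle : ε * (2 * (C + 1)) ≤ ‖Φ0‖ := by
      have := min_le_right (1 / (2 * M + 2)) (‖Φ0‖ / (2 * (C + 1)))
      rw [le_div_iff₀ (by positivity : (0:ℝ) < 2 * (C + 1))] at this
      exact this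
    nlinarith [mul_nonneg hC0 hεpos.le]
  -- convert the goal
  refine Eq.trans ?_ hPhi0
  rw [hPhi0def]
  refine integral_congr_ae (Filter.Eventually.of_forall fun r => ?_)
  show (Complex.exp (2 * (Real.pi : ℂ) * Complex.I * ((p : ℂ) * (x r.1) + (q : ℂ) * (x r.2)))
      - Complex.exp (2 * (Real.pi : ℂ) * Complex.I * ((p : ℂ) * (x r.2) + (q : ℂ) * (x r.1))))
      * (gy r.1 : ℂ) * (gy r.2 : ℂ)
    = (Complex.exp (2 * ((p + q : ℤ) : ℂ) * (Real.pi : ℂ) * Complex.I * (x r.1)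
        + b0 * ((x r.2 : ℂ) - (x r.1 : ℂ)))
      - Complex.exp (2 * ((p + q : ℤ) : ℂ) * (Real.pi : ℂ) * Complex.I * (x r.2)
        + b0 * ((x r.1 : ℂ) - (x r.2 : ℂ))))
      * (gy r.1 : ℂ) * (gy r.2 : ℂ)
  rw [show 2 * (Real.pi : ℂ) * Complex.I * ((p : ℂ) * (x r.1) + (q : ℂ) * (x r.2))
      = 2 * ((p + q : ℤ) : ℂ) * (Real.pi : ℂ) * Complex.I * (x r.1)
          + b0 * ((x r.2 : ℂ) - (x r.1 : ℂ)) by rw [hb0def]; push_cast; ring,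
    show 2 * (Real.pi : ℂ) * Complex.I * ((p : ℂ) * (x r.2) + (q : ℂ) * (x r.1))
      = 2 * ((p + q : ℤ) : ℂ) * (Real.pi : ℂ) * Complex.I * (x r.2)
          + b0 * ((x r.1 : ℂ) - (x r.2 : ℂ)) by rw [hb0def]; push_cast; ring]
end

section
/- For any word J = (j₁, …, j_m) with m ≥ 2, the iterated Lie bracket e_{[J]} := [e_{j₁}, [e_{j₂}, …, [e_{j_{m−1}}, e_{j_m}]…]] in the tensor algebra satisfies e_{[J]} = Σ_{K ⊆ (1,…,m−2)} (−1)^{|K|} e_{J∖(J_K, j_{m−1}, j_m)} ⊗ [e_{j_{m−1}}, e_{j_m}] ⊗ e_{reverse(J_K)}, where the sum is over all (possibly empty) ordered subwords K of (1,…,m−2), J_K is the corresponding subword of J, J∖(J_K, j_{m−1}, j_m) is the complementary subword, and e_{(k₁,…,k_r)} := e_{k₁} ⊗ ⋯ ⊗ e_{k_r} with e_∅ := 1. -/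
noncomputable section

variable {d : ℕ}

/-- The iterated (right-nested) Lie bracket `[e_{j₁},[e_{j₂},…,[e_{j_{m−1}}, e_{j_m}]…]]`
of the generators indexed by a word, inside the tensor (free) algebra. -/
def lieWord : List (Fin d) → FreeAlgebra ℂ (Fin d)
  | [] => 0
  | [j] => FreeAlgebra.ι ℂ j
  | j :: l => FreeAlgebra.ι ℂ j * lieWord l - lieWord l * FreeAlgebra.ι ℂ j

/-- The product `e_{k₁} ⊗ ⋯ ⊗ e_{k_r}` of the generators indexed by a word
(`e_∅ = 1`). -/
def wordProd (l : List (Fin d)) : FreeAlgebra ℂ (Fin d) :=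
  (l.map (FreeAlgebra.ι ℂ)).prod

/-- The subword of `l` indexed by a set `K` of positions, in increasing order. -/
def subword (l : List (Fin d)) (K : Finset (Fin l.length)) : List (Fin d) :=
  (K.sort (· ≤ ·)).map l.get

lemma lieWord_cons (j : Fin d) (L : List (Fin d)) (h : L ≠ []) :
    lieWord (j :: L) = FreeAlgebra.ι ℂ j * lieWord L - lieWord L * FreeAlgebra.ι ℂ j := by
  cases L with
  | nil => exact absurd rfl h
  | cons x t => rfl

lemma wordProd_cons (j : Fin d) (t : List (Fin d)) :
    wordProd (j :: t) = FreeAlgebra.ι ℂ j * wordProd t := by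
  simp [wordProd]

lemma wordProd_append (s t : List (Fin d)) :
    wordProd (s ++ t) = wordProd s * wordProd t := by
  simp [wordProd]

lemma sort_map_succ {n : ℕ} (s : Finset (Fin n)) :
    (s.map (Fin.succEmb n)).sort (· ≤ ·) = (s.sort (· ≤ ·)).map Fin.succ := by
  have := Multiset.map_sort (r := ((· ≤ ·) : Fin n → Fin n → Prop))
    (r' := ((· ≤ ·) : Fin (n+1) → Fin (n+1) → Prop)) Fin.succ s.1
    (fun a _ b _ => (Fin.succ_le_succ_iff).symm)
  simp only [Finset.sort, Finset.map_val] at *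
  exact this.symm

lemma zero_not_mem_map_succ {n : ℕ} (s : Finset (Fin n)) :
    (0 : Fin (n+1)) ∉ s.map (Fin.succEmb n) := by
  simp only [Finset.mem_map]
  rintro ⟨y, -, hy⟩
  exact (Fin.succ_ne_zero y) hy

def finsetSuccEquiv (n : ℕ) : Finset (Fin (n+1)) ≃ Bool × Finset (Fin n) where
  toFun K := (decide ((0 : Fin (n+1)) ∈ K), K.preimage Fin.succ (Fin.succ_injective n).injOn)
  invFun p := if p.1 then insert 0 (p.2.map (Fin.succEmb n)) else p.2.map (Fin.succEmb n)
  left_inv K := by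
    by_cases h0 : (0 : Fin (n+1)) ∈ K
    · simp only [h0, decide_true, if_true]
      ext x
      cases x using Fin.cases <;>
        simp [Finset.mem_preimage, h0, Fin.succ_ne_zero]
    · simp only [h0, decide_false, if_false]
      ext x
      cases x using Fin.cases <;>
        simp [Finset.mem_preimage, h0, Fin.succ_ne_zero, eq_comm (a := (0 : Fin (n+1)))]
  right_inv p := by
    obtain ⟨b, s⟩ := p
    cases b
    · simp only [if_false]
      refine Prod.ext ?_ ?_
      · simp [zero_not_mem_map_succ s]
      · ext x
        simp [Finset.mem_preimage, (Fin.succ_injective n).eq_iff]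
    · simp only [if_true]
      refine Prod.ext ?_ ?_
      · simp
      · ext x
        simp [Finset.mem_preimage, Fin.succ_ne_zero, (Fin.succ_injective n).eq_iff]

lemma compl_map_succ {n : ℕ} (s : Finset (Fin n)) :
    (s.map (Fin.succEmb n))ᶜ = insert 0 (sᶜ.map (Fin.succEmb n)) := by
  ext x
  cases x using Fin.cases <;>
    simp [zero_not_mem_map_succ, (Fin.succ_injective n).eq_iff, Fin.succ_ne_zero,
      eq_comm (a := (0 : Fin (n+1)))]

lemma compl_insert_zero {n : ℕ} (s : Finset (Fin n)) :
    (insert (0 : Fin (n+1)) (s.map (Fin.succEmb n)))ᶜ = sᶜ.map (Fin.succEmb n) := by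
  ext x
  cases x using Fin.cases <;>
    simp [zero_not_mem_map_succ, (Fin.succ_injective n).eq_iff, Fin.succ_ne_zero,
      eq_comm (a := (0 : Fin (n+1)))]

lemma sort_insert_zero {n : ℕ} (s : Finset (Fin n)) :
    (insert (0 : Fin (n+1)) (s.map (Fin.succEmb n))).sort (· ≤ ·)
      = 0 :: (s.map (Fin.succEmb n)).sort (· ≤ ·) :=
  Finset.sort_insert _ (fun b _ => Fin.zero_le b) (zero_not_mem_map_succ s)

lemma subword_cons_map (j : Fin d) (l : List (Fin d)) (s : Finset (Fin l.length)) :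
    subword (j :: l) (s.map (Fin.succEmb l.length)) = subword l s := by
  show ((s.map (Fin.succEmb l.length)).sort (· ≤ ·)).map
      (fun i : Fin (l.length + 1) => (j :: l).get i) = _
  rw [sort_map_succ, List.map_map]
  rfl

lemma subword_cons_insert (j : Fin d) (l : List (Fin d)) (s : Finset (Fin l.length)) :
    subword (j :: l) (insert (0 : Fin (l.length + 1)) (s.map (Fin.succEmb l.length)))
      = j :: subword l s := by
  show ((insert (0 : Fin (l.length + 1)) (s.map (Fin.succEmb l.length))).sort (· ≤ ·)).map
      (fun i : Fin (l.length + 1) => (j :: l).get i) = _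
  rw [sort_insert_zero, List.map_cons, sort_map_succ, List.map_map]
  rfl

lemma step_false (j : Fin d) (l : List (Fin d)) (B : FreeAlgebra ℂ (Fin d))
    (s : Finset (Fin l.length)) :
    ((-1 : ℂ) ^ (s.map (Fin.succEmb l.length)).card) •
      (wordProd (subword (j :: l) ((s.map (Fin.succEmb l.length))ᶜ)) * B *
        wordProd ((subword (j :: l) (s.map (Fin.succEmb l.length))).reverse))
    = FreeAlgebra.ι ℂ j *
        (((-1 : ℂ) ^ s.card) •
          (wordProd (subword l sᶜ) * B * wordProd ((subword l s).reverse))) := by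
  rw [Finset.card_map, compl_map_succ, subword_cons_insert, subword_cons_map, wordProd_cons]
  simp [mul_assoc, mul_smul_comm]

lemma step_true (j : Fin d) (l : List (Fin d)) (B : FreeAlgebra ℂ (Fin d))
    (s : Finset (Fin l.length)) :
    ((-1 : ℂ) ^ (insert (0 : Fin (l.length + 1)) (s.map (Fin.succEmb l.length))).card) •
      (wordProd (subword (j :: l)
          ((insert (0 : Fin (l.length + 1)) (s.map (Fin.succEmb l.length)))ᶜ)) * B *
        wordProd ((subword (j :: l)
          (insert (0 : Fin (l.length + 1)) (s.map (Fin.succEmb l.length)))).reverse))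
    = -((((-1 : ℂ) ^ s.card) •
          (wordProd (subword l sᶜ) * B * wordProd ((subword l s).reverse))) *
        FreeAlgebra.ι ℂ j) := by
  rw [Finset.card_insert_of_notMem (zero_not_mem_map_succ s), Finset.card_map,
    compl_insert_zero, subword_cons_map, subword_cons_insert, List.reverse_cons,
    wordProd_append]
  have h1 : wordProd [j] = FreeAlgebra.ι ℂ j := by simp [wordProd]
  rw [h1, pow_succ]
  simp [mul_assoc, smul_mul_assoc, neg_smul, mul_smul_comm]

/-- For a word `J = (j₁,…,j_m)` with `m ≥ 2`, written as
`J = l ++ [a, b]` (so `l` consists of the first `m − 2` letters), one has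
`e_{[J]} = Σ_{K ⊆ (1,…,m−2)} (−1)^{|K|}
  e_{J∖(J_K, j_{m−1}, j_m)} ⊗ [e_{j_{m−1}}, e_{j_m}] ⊗ e_{reverse(J_K)}`,
the sum being over all subwords `K` of the positions `(1,…,m−2)`. -/
theorem lie_monomial_expansion (l : List (Fin d)) (a b : Fin d) :
    lieWord (l ++ [a, b])
      = ∑ K : Finset (Fin l.length),
          ((-1 : ℂ) ^ K.card) •
            (wordProd (subword l Kᶜ) *
              (FreeAlgebra.ι ℂ a * FreeAlgebra.ι ℂ b
                - FreeAlgebra.ι ℂ b * FreeAlgebra.ι ℂ a) *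
              wordProd ((subword l K).reverse)) := by
  induction l with
  | nil =>
      haveI : Subsingleton (Finset (Fin (List.length ([] : List (Fin d))))) :=
        ⟨fun s t => by ext x; exact x.elim0⟩
      rw [Fintype.sum_subsingleton _ ∅]
      rw [Subsingleton.elim ((∅ : Finset (Fin (List.length ([] : List (Fin d)))))ᶜ) ∅]
      simp [subword, wordProd, lieWord]
  | cons j l ih =>
      have hne : l ++ [a, b] ≠ [] := by simp
      set B := FreeAlgebra.ι ℂ a * FreeAlgebra.ι ℂ b - FreeAlgebra.ι ℂ b * FreeAlgebra.ι ℂ a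
      rw [List.cons_append, lieWord_cons j _ hne, ih, Finset.mul_sum, Finset.sum_mul]
      refine Eq.trans ?_ (Equiv.sum_comp (finsetSuccEquiv l.length).symm _)
      rw [Fintype.sum_prod_type, Fintype.sum_bool]
      have e_true : ∀ s : Finset (Fin l.length),
          (finsetSuccEquiv l.length).symm (true, s)
            = insert (0 : Fin (l.length + 1)) (s.map (Fin.succEmb l.length)) := by
        intro s; simp [finsetSuccEquiv]
      have e_false : ∀ s : Finset (Fin l.length),
          (finsetSuccEquiv l.length).symm (false, s) = s.map (Fin.succEmb l.length) := by
        intro s; simp [finsetSuccEquiv]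
      calc ∑ s : Finset (Fin l.length),
              FreeAlgebra.ι ℂ j *
                (((-1:ℂ) ^ s.card) • (wordProd (subword l sᶜ) * B * wordProd (subword l s).reverse))
            - ∑ s : Finset (Fin l.length),
              (((-1:ℂ) ^ s.card) • (wordProd (subword l sᶜ) * B * wordProd (subword l s).reverse))
                * FreeAlgebra.ι ℂ j
          = (∑ s : Finset (Fin l.length),
              -((((-1:ℂ) ^ s.card) • (wordProd (subword l sᶜ) * B * wordProd (subword l s).reverse))
                * FreeAlgebra.ι ℂ j))
            + ∑ s : Finset (Fin l.length),
              FreeAlgebra.ι ℂ j *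
                (((-1:ℂ) ^ s.card) • (wordProd (subword l sᶜ) * B * wordProd (subword l s).reverse)) := by
            rw [Finset.sum_neg_distrib]; abel
        _ = _ := by
            congr 1
            · exact Finset.sum_congr rfl fun s _ => by
                rw [e_true s]; exact (step_true j l B s).symm
            · exact Finset.sum_congr rfl fun s _ => by
                rw [e_false s]; exact (step_false j l B s).symm

end
end
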